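/- arXiv:1702.05468 — 7 statements merged into one kernel-verified Lean document; each statement's English description precedes it below -/
import Mathlib

section
/- Let Q be a rate matrix on a countable state space S, let π be a stationary solution of the CME for Q, and let f : S → ℝ be such that ⟨q|f|⟩ := ∑_{x∈S} q(x)|f(x)|π(x) < ∞. Then the double sum ∑_{x∈S} ∑_{y∈S} π(x) q(x,y) f(y) is absolutely summable and ⟨Qf⟩ := ∑_{x∈S} (∑_{y∈S} q(x,y) f(y)) π(x) = 0 (the stationary adjoint equation). -/
open scoped Classical

/-- stationary adjoint equation.
Let `Q = (q x y)` be a rate matrix on a countable state space `S` (off-diagonal entries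
nonnegative, rows summing to zero, with `q x := -(q x x) = ∑_{y ≠ x} q x y < ∞`),
let `π` be a stationary solution of the CME for `Q`, and let `f : S → ℝ` be such that
`⟨q|f|⟩ = ∑ x, q x * |f x| * π x < ∞`.  Then the double sum
`∑_{x ∈ S} ∑_{y ∈ S} π x * q x y * f y` is absolutely summable and
`⟨Qf⟩ = ∑ x, (∑ y, q x y * f y) * π x = 0`. -/
theorem stationary_adjoint_equation
    {S : Type*} [Countable S] (q : S → S → ℝ)
    (hq_offdiag : ∀ x y : S, x ≠ y → 0 ≤ q x y)
    (hq_row : ∀ x : S, HasSum (fun y => if y = x then 0 else q x y) (-(q x x)))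
    (π : S → ℝ) (hπ_nonneg : ∀ x, 0 ≤ π x) (hπ_mass : HasSum π 1)
    (hπ_stat : ∀ x : S, HasSum (fun y => π y * q y x) 0)
    (f : S → ℝ)
    (hqf : Summable (fun x => -(q x x) * |f x| * π x)) :
    Summable (fun p : S × S => π p.1 * q p.1 p.2 * f p.2) ∧
      ∑' x : S, (∑' y : S, q x y * f y) * π x = 0 := by
  set g : S × S → ℝ := fun p => π p.1 * q p.1 p.2 * f p.2 with hgdef
  -- the diagonal entries are nonpositive
  have hqx : ∀ x : S, 0 ≤ -(q x x) := by
    intro x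
    refine hasSum_le (fun y => ?_) hasSum_zero (hq_row x)
    by_cases h : y = x
    · simp [h]
    · simpa [h] using hq_offdiag x y (fun hxy => h hxy.symm)
  -- diagonal part of |g|
  set D : S × S → ℝ := fun p => if p.2 = p.1 then π p.1 * (-(q p.1 p.1)) * |f p.1| else 0
    with hDdef
  have hD : Summable D := by
    have hinj : Function.Injective (fun x : S => ((x, x) : S × S)) := by
      intro a b h
      exact (Prod.mk.injEq _ _ _ _).mp h |>.1
    have hvanish : ∀ p : S × S, p ∉ Set.range (fun x : S => ((x, x) : S × S)) → D p = 0 := by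
      intro p hp
      have : p.2 ≠ p.1 := by
        intro h
        exact hp ⟨p.1, by simp [Prod.ext_iff, h.symm]⟩
      simp [hDdef, this]
    rw [← Function.Injective.summable_iff hinj hvanish]
    exact hqf.congr (fun x => by simp [hDdef]; ring)
  -- key: for fixed y, the off-diagonal column sums
  have key : ∀ y : S, HasSum (fun x => if y = x then 0 else π x * q x y)
      (π y * (-(q y y))) := by
    intro y
    have h1 := hπ_stat y
    have h2 : HasSum (fun x => if x = y then π y * q y y else 0) (π y * q y y) :=
      hasSum_ite_eq y _
    have h3 := h1.sub h2
    have hfun : (fun x => if y = x then (0:ℝ) else π x * q x y) =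
        fun x => π x * q x y - if x = y then π y * q y y else 0 := by
      funext x
      by_cases h : y = x
      · subst h; simp
      · rw [if_neg h, if_neg (fun hh : x = y => h hh.symm), sub_zero]
    rw [hfun]
    convert h3 using 1
    · rfl
    · ring
  -- off-diagonal part of |g|
  set O : S × S → ℝ := fun p => if p.2 = p.1 then 0 else π p.1 * q p.1 p.2 * |f p.2|
    with hOdef
  have hO : Summable O := by
    rw [← (Equiv.prodComm S S).summable_iff]
    have hOs : ∀ p : S × S, (O ∘ (Equiv.prodComm S S)) p =
        (if p.1 = p.2 then 0 else π p.2 * q p.2 p.1) * |f p.1| := by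
      intro p
      by_cases h : p.1 = p.2 <;> simp [hOdef, h, Equiv.prodComm]
    have hnn : ∀ p : S × S, 0 ≤ (O ∘ (Equiv.prodComm S S)) p := by
      intro p
      rw [hOs]
      by_cases h : p.1 = p.2
      · simp [h]
      · have := hq_offdiag p.2 p.1 (fun hh => h hh.symm)
        have := hπ_nonneg p.2
        simp only [if_neg h]
        positivity
    rw [summable_prod_of_nonneg hnn]
    constructor
    · intro y
      exact (((key y).summable.mul_right |f y|).congr (fun x => (hOs (y, x)).symm))
    · have htsum : ∀ y : S, (∑' x, (O ∘ (Equiv.prodComm S S)) (y, x)) =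
          -(q y y) * |f y| * π y := by
        intro y
        have := ((key y).mul_right |f y|).tsum_eq
        calc (∑' x, (O ∘ (Equiv.prodComm S S)) (y, x))
            = ∑' x, (if y = x then 0 else π x * q x y) * |f y| :=
              tsum_congr (fun x => hOs (y, x))
          _ = π y * (-(q y y)) * |f y| := this
          _ = -(q y y) * |f y| * π y := by ring
      exact hqf.congr (fun y => (htsum y).symm)
  -- |g| = D + O, so g is absolutely summable
  have habs : ∀ p : S × S, |g p| = D p + O p := by
    intro p
    by_cases h : p.2 = p.1
    · have : |q p.1 p.1| = -(q p.1 p.1) := abs_of_nonpos (by linarith [hqx p.1])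
      simp only [hgdef, hDdef, hOdef, if_pos h, h, add_zero]
      rw [abs_mul, abs_mul, abs_of_nonneg (hπ_nonneg _), this]
    · have hq : 0 ≤ q p.1 p.2 := hq_offdiag p.1 p.2 (fun hh => h hh.symm)
      simp only [hgdef, hDdef, hOdef, if_neg h, zero_add]
      rw [abs_mul, abs_mul, abs_of_nonneg (hπ_nonneg _), abs_of_nonneg hq]
  have hG : Summable g := by
    rw [← summable_abs_iff]
    exact (hD.add hO).congr (fun p => (habs p).symm)
  refine ⟨hG, ?_⟩
  have hG' : Summable (fun p : S × S => π p.2 * q p.2 p.1 * f p.1) :=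
    (Equiv.prodComm S S).summable_iff.mpr hG
  have hzero : ∑' p : S × S, g p = 0 := by
    have he : ∑' p : S × S, g p = ∑' p : S × S, π p.2 * q p.2 p.1 * f p.1 :=
      ((Equiv.prodComm S S).tsum_eq g).symm
    rw [he, Summable.tsum_prod hG']
    have hinner : ∀ a : S, (∑' b : S, π b * q b a * f a) = 0 := by
      intro a
      rw [tsum_mul_right, (hπ_stat a).tsum_eq, zero_mul]
    calc ∑' (a : S), ∑' (b : S), π b * q b a * f a = ∑' (a : S), (0:ℝ) :=
          tsum_congr hinner
      _ = 0 := tsum_zero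
  calc ∑' x : S, (∑' y : S, q x y * f y) * π x
      = ∑' x : S, ∑' y : S, g (x, y) := by
        refine tsum_congr fun x => ?_
        rw [← tsum_mul_right]
        exact tsum_congr fun y => by simp only [hgdef]; ring
    _ = ∑' p : S × S, g p := (Summable.tsum_prod hG).symm
    _ = 0 := hzero
end

section
/- Let π be a stationary solution of the CME for Schlögl's model whose fourth moment ⟨x⁴⟩ is finite. Then its first three moments satisfy the first stationary moment equation b₁ − b₂⟨x⟩ + b₃⟨x²⟩ − b₄⟨x³⟩ = 0, where b₁ := k₃, b₂ := k₁ + 2k₂ + k₄, b₃ := k₁ + 3k₂, and b₄ := k₂. -/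
/-- Propensity `a₁(x) = k₁ x (x-1)` of Schlögl's model. -/
noncomputable def schloglA1 (k₁ : ℝ) (x : ℕ) : ℝ := k₁ * x * ((x : ℝ) - 1)

/-- Propensity `a₂(x) = k₂ x (x-1) (x-2)` of Schlögl's model. -/
noncomputable def schloglA2 (k₂ : ℝ) (x : ℕ) : ℝ := k₂ * x * ((x : ℝ) - 1) * ((x : ℝ) - 2)

/-- Propensity `a₃(x) = k₃` of Schlögl's model. -/
noncomputable def schloglA3 (k₃ : ℝ) (_x : ℕ) : ℝ := k₃

/-- Propensity `a₄(x) = k₄ x` of Schlögl's model. -/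
noncomputable def schloglA4 (k₄ : ℝ) (x : ℕ) : ℝ := k₄ * x

/-- The rate matrix of Schlögl's model: `q(x, x+1) = a₁(x) + a₃(x)`,
`q(x, x-1) = a₂(x) + a₄(x)` for `x ≥ 1`, `q(x,x) = -∑ⱼ aⱼ(x)`, all other entries `0`. -/
noncomputable def schloglQ (k₁ k₂ k₃ k₄ : ℝ) (x y : ℕ) : ℝ :=
  if y = x + 1 then schloglA1 k₁ x + schloglA3 k₃ x
  else if y + 1 = x then schloglA2 k₂ x + schloglA4 k₄ x
  else if y = x then
    -(schloglA1 k₁ x + schloglA2 k₂ x + schloglA3 k₃ x + schloglA4 k₄ x)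
  else 0

/-- first stationary moment equation of Schlögl's model.
If `π` is a stationary solution of the CME for Schlögl's model whose fourth moment
`⟨x⁴⟩` is finite, then `b₁ - b₂⟨x⟩ + b₃⟨x²⟩ - b₄⟨x³⟩ = 0` with `b₁ = k₃`,
`b₂ = k₁ + 2k₂ + k₄`, `b₃ = k₁ + 3k₂` and `b₄ = k₂`. -/
theorem schlogl_first_moment_equation
    (k₁ k₂ k₃ k₄ : ℝ) (hk₁ : 0 < k₁) (hk₂ : 0 < k₂) (hk₃ : 0 < k₃) (hk₄ : 0 < k₄)
    (π : ℕ → ℝ) (hπ_nonneg : ∀ x, 0 ≤ π x) (hπ_mass : HasSum π 1)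
    (hπ_stat : ∀ x : ℕ, ∑' y : ℕ, π y * schloglQ k₁ k₂ k₃ k₄ y x = 0)
    (hmom4 : Summable (fun x : ℕ => (x : ℝ) ^ 4 * π x)) :
    k₃ - (k₁ + 2 * k₂ + k₄) * (∑' x : ℕ, (x : ℝ) * π x)
        + (k₁ + 3 * k₂) * (∑' x : ℕ, (x : ℝ) ^ 2 * π x)
        - k₂ * (∑' x : ℕ, (x : ℝ) ^ 3 * π x) = 0 := by
  set lam : ℕ → ℝ := fun x => schloglA1 k₁ x + schloglA3 k₃ x with hlam
  set mu : ℕ → ℝ := fun x => schloglA2 k₂ x + schloglA4 k₄ x with hmu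
  -- detailed balance
  have key : ∀ x, π x * lam x = π (x + 1) * mu (x + 1) := by
    intro x
    induction x with
    | zero =>
      have h := hπ_stat 0
      rw [tsum_eq_sum (s := ({0, 1} : Finset ℕ))] at h
      · rw [Finset.sum_insert (by simp), Finset.sum_singleton] at h
        have q0 : schloglQ k₁ k₂ k₃ k₄ 0 0 = -k₃ := by
          norm_num [schloglQ, schloglA1, schloglA2, schloglA3, schloglA4]
        have q1 : schloglQ k₁ k₂ k₃ k₄ 1 0 = k₄ := by
          norm_num [schloglQ, schloglA2, schloglA4]
        rw [q0, q1] at h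
        have v0 : lam 0 = k₃ := by norm_num [hlam, schloglA1, schloglA3]
        have v1 : mu 1 = k₄ := by norm_num [hmu, schloglA2, schloglA4]
        rw [v0, v1]
        linarith
      · intro b hb
        simp only [Finset.mem_insert, Finset.mem_singleton] at hb
        push_neg at hb
        have hb0 : b ≠ 0 := hb.1
        have hb1 : b ≠ 1 := hb.2
        simp only [schloglQ]
        rw [if_neg (by omega), if_neg (by omega), if_neg (by omega), mul_zero]
    | succ n ih =>
      have h := hπ_stat (n + 1)
      rw [tsum_eq_sum (s := ({n, n + 1, n + 2} : Finset ℕ))] at h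
      · have hmem : n ∉ ({n + 1, n + 2} : Finset ℕ) := by simp
        have hmem2 : n + 1 ∉ ({n + 2} : Finset ℕ) := by simp
        rw [Finset.sum_insert hmem, Finset.sum_insert hmem2, Finset.sum_singleton] at h
        have e1 : schloglQ k₁ k₂ k₃ k₄ n (n + 1) = lam n := by
          simp [schloglQ, hlam]
        have e2 : schloglQ k₁ k₂ k₃ k₄ (n + 1) (n + 1) = -(lam (n + 1) + mu (n + 1)) := by
          simp only [schloglQ, hlam, hmu, if_neg (show ¬(n + 1 = n + 1 + 1) by omega),
            if_neg (show ¬(n + 1 + 1 = n + 1) by omega), if_pos rfl, if_true]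
          ring
        have e3 : schloglQ k₁ k₂ k₃ k₄ (n + 2) (n + 1) = mu (n + 2) := by
          simp only [schloglQ, hmu, if_neg (show ¬(n + 1 = n + 2 + 1) by omega), if_pos rfl, if_true]
        rw [e1, e2, e3] at h
        have hq : π n * lam n + π (n + 2) * mu (n + 2)
            = π (n + 1) * (lam (n + 1) + mu (n + 1)) := by linarith
        rw [ih] at hq
        linarith
      · intro b hb
        simp only [Finset.mem_insert, Finset.mem_singleton] at hb
        push_neg at hb
        simp only [schloglQ]
        rw [if_neg (by omega), if_neg (by omega), if_neg (by omega), mul_zero]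
  have hs0 : Summable π := hπ_mass.summable
  have hmon : ∀ m : ℕ, m ≤ 4 → Summable (fun x : ℕ => (x : ℝ) ^ m * π x) := by
    intro m hm
    refine Summable.of_nonneg_of_le
      (fun x => mul_nonneg (pow_nonneg (Nat.cast_nonneg x) m) (hπ_nonneg x))
      (fun x => ?_) (hs0.add hmom4)
    have hb : (x : ℝ) ^ m ≤ 1 + (x : ℝ) ^ 4 := by
      rcases Nat.eq_zero_or_pos x with h | h
      · subst h
        rcases Nat.eq_zero_or_pos m with hm0 | hm0
        · norm_num [hm0]
        · norm_num [zero_pow hm0.ne']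
      · have h1 : (1 : ℝ) ≤ (x : ℝ) := by exact_mod_cast h
        have : (x : ℝ) ^ m ≤ (x : ℝ) ^ 4 := pow_le_pow_right₀ h1 hm
        nlinarith
    calc (x : ℝ) ^ m * π x ≤ (1 + (x : ℝ) ^ 4) * π x := by
          exact mul_le_mul_of_nonneg_right hb (hπ_nonneg x)
      _ = π x + (x : ℝ) ^ 4 * π x := by ring
  have hm1 := hmon 1 (by norm_num)
  have hm2 := hmon 2 (by norm_num)
  have hm3 := hmon 3 (by norm_num)
  have hlams : Summable (fun x : ℕ => π x * lam x) := by
    have heq : (fun x : ℕ => π x * lam x)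
        = fun x : ℕ => k₁ * ((x : ℝ) ^ 2 * π x) - k₁ * ((x : ℝ) ^ 1 * π x) + k₃ * π x := by
      funext x
      simp only [hlam, schloglA1, schloglA3]
      ring
    rw [heq]
    exact ((hm2.mul_left k₁).sub (hm1.mul_left k₁)).add (hs0.mul_left k₃)
  have hmus : Summable (fun x : ℕ => π x * mu x) := by
    have heq : (fun x : ℕ => π x * mu x)
        = fun x : ℕ => k₂ * ((x : ℝ) ^ 3 * π x) - (3 * k₂) * ((x : ℝ) ^ 2 * π x)
            + (2 * k₂ + k₄) * ((x : ℝ) ^ 1 * π x) := by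
      funext x
      simp only [hmu, schloglA2, schloglA4]
      ring
    rw [heq]
    exact ((hm3.mul_left k₂).sub (hm2.mul_left (3 * k₂))).add (hm1.mul_left (2 * k₂ + k₄))
  -- sum identity: ∑ π λ = ∑ π μ
  have hshift : ∑' x : ℕ, π x * lam x = ∑' x : ℕ, π x * mu x := by
    rw [tsum_congr key]
    have h0 : π 0 * mu 0 = 0 := by
      simp [hmu, schloglA2, schloglA4]
    rw [Summable.tsum_eq_zero_add hmus, h0, zero_add]
  have hfin : ∑' x : ℕ, (π x * lam x - π x * mu x) = 0 := by
    rw [Summable.tsum_sub hlams hmus, hshift, sub_self]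
  have heq2 : (fun x : ℕ => π x * lam x - π x * mu x)
      = fun x : ℕ => k₃ * π x - (k₁ + 2 * k₂ + k₄) * ((x : ℝ) ^ 1 * π x)
          + (k₁ + 3 * k₂) * ((x : ℝ) ^ 2 * π x) - k₂ * ((x : ℝ) ^ 3 * π x) := by
    funext x
    simp only [hlam, hmu, schloglA1, schloglA2, schloglA3, schloglA4]
    ring
  rw [heq2] at hfin
  rw [Summable.tsum_sub (((hs0.mul_left k₃).sub (hm1.mul_left _)).add (hm2.mul_left _))
      (hm3.mul_left k₂), Summable.tsum_add ((hs0.mul_left k₃).sub (hm1.mul_left _))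
      (hm2.mul_left _), Summable.tsum_sub (hs0.mul_left k₃) (hm1.mul_left _),
      tsum_mul_left, tsum_mul_left, tsum_mul_left, tsum_mul_left, hπ_mass.tsum_eq] at hfin
  simp only [pow_one] at hfin
  linarith
end

section
/- (Theorem 1 of the paper.) Consider a reaction network on S ⊆ ℕⁿ with rational propensities a_j = s_j/o, and let d ≥ d_o. Let π be a stationary solution of the CME whose rational moments z_β := ⟨x^β/o⟩ are finite for all |β| ≤ d+1. Then the vector z = (z_β)_{|β|≤d} belongs to the spectrahedron 𝓔^d, i.e.: (1) zᵀ𝐨 = 1, where 𝐨 is the coefficient vector of o; (2) for every multi-index α with |α| ≤ d − d_a + 1, zᵀ𝐠_α = 0, where 𝐠_α is the coefficient vector of the polynomial x ↦ ∑_{j=1}^m s_j(x)((x+v_j)^α − x^α); and (3) the localising matrices M_d⁰(z), M_d¹(z), …, M_dⁿ(z) are positive semidefinite. -/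
open MvPolynomial

/-- The rational moment `z_β = ⟨x^β / o⟩` of `π` w.r.t. the denominator polynomial `o`. -/
noncomputable def ratMoment {n : ℕ} (o : MvPolynomial (Fin n) ℝ)
    (π : (Fin n → ℕ) → ℝ) (β : Fin n →₀ ℕ) : ℝ :=
  ∑' x : Fin n → ℕ, (∏ i, (x i : ℝ) ^ β i) / eval (fun i => (x i : ℝ)) o * π x

/-- `π` has finite rational moments `⟨x^β / o⟩` for all multi-indices `β` with `|β| ≤ d`. -/
def HasRatMoments {n : ℕ} (o : MvPolynomial (Fin n) ℝ)
    (π : (Fin n → ℕ) → ℝ) (d : ℕ) : Prop :=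
  ∀ β : Fin n →₀ ℕ, (∑ i, β i) ≤ d →
    Summable (fun x : Fin n → ℕ =>
      (∏ i, (x i : ℝ) ^ β i) / eval (fun i => (x i : ℝ)) o * π x)

/-- The polynomial `x ↦ ∑ⱼ sⱼ(x) ((x + vⱼ)^α - x^α)` appearing in the `α`-moment
equation. -/
noncomputable def momentPoly {n m : ℕ} (v : Fin m → Fin n → ℤ)
    (s : Fin m → MvPolynomial (Fin n) ℝ) (α : Fin n →₀ ℕ) : MvPolynomial (Fin n) ℝ :=
  ∑ j, s j * ((∏ i, (X i + C ((v j i : ℝ))) ^ α i) -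
    ∏ i, (X i : MvPolynomial (Fin n) ℝ) ^ α i)

/-- The spectrahedron `𝓔^d`: vectors `y = (y_β)` satisfying the normalisation
`yᵀ𝐨 = 1`, the moment equations `yᵀ𝐠_α = 0` for `|α| ≤ d - d_a + 1`, and positive
semidefiniteness of the localising matrices `M_d⁰(y), …, M_dⁿ(y)` (expressed via their
quadratic forms on coefficient vectors of polynomials of the appropriate degrees). -/
def spectrahedron {n m : ℕ} (v : Fin m → Fin n → ℤ) (s : Fin m → MvPolynomial (Fin n) ℝ)
    (o : MvPolynomial (Fin n) ℝ) (da d : ℕ) : Set ((Fin n →₀ ℕ) → ℝ) :=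
  {y | (∑ β ∈ o.support, coeff β o * y β = 1) ∧
    (∀ α : Fin n →₀ ℕ, ((∑ i, (α i : ℤ)) ≤ (d : ℤ) - (da : ℤ) + 1) →
      ∑ β ∈ (momentPoly v s α).support, coeff β (momentPoly v s α) * y β = 0) ∧
    (∀ g : MvPolynomial (Fin n) ℝ, g.totalDegree ≤ d / 2 →
      0 ≤ ∑ α ∈ g.support, ∑ β ∈ g.support, coeff α g * coeff β g * y (α + β)) ∧
    (∀ i₀ : Fin n, ∀ g : MvPolynomial (Fin n) ℝ, g.totalDegree ≤ (d - 1) / 2 →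
      0 ≤ ∑ α ∈ g.support, ∑ β ∈ g.support,
        coeff α g * coeff β g * y (α + β + Finsupp.single i₀ 1))}


lemma hasSum_comb {n : ℕ} {o : MvPolynomial (Fin n) ℝ} {π : (Fin n → ℕ) → ℝ} {D : ℕ}
    (hmom : HasRatMoments o π D) {ι : Type*} (t : Finset ι)
    (c : ι → ℝ) (e : ι → (Fin n →₀ ℕ)) (he : ∀ i ∈ t, (∑ k, e i k) ≤ D) :
    HasSum (fun x : Fin n → ℕ =>
        (∑ i ∈ t, c i * ∏ k, (x k : ℝ) ^ e i k) / eval (fun k => (x k : ℝ)) o * π x)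
      (∑ i ∈ t, c i * ratMoment o π (e i)) := by
  have h := hasSum_sum (f := fun i (x : Fin n → ℕ) =>
      c i * ((∏ k, (x k : ℝ) ^ e i k) / eval (fun k => (x k : ℝ)) o * π x))
      (a := fun i => c i * ratMoment o π (e i)) (s := t)
      (fun i hi => ((hmom (e i) (he i hi)).hasSum).mul_left _)
  have hfun : (fun x : Fin n → ℕ =>
        (∑ i ∈ t, c i * ∏ k, (x k : ℝ) ^ e i k) / eval (fun k => (x k : ℝ)) o * π x)
      = fun x => ∑ i ∈ t, c i * ((∏ k, (x k : ℝ) ^ e i k) / eval (fun k => (x k : ℝ)) o * π x) := by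
    funext x
    rw [Finset.sum_div, Finset.sum_mul]
    exact Finset.sum_congr rfl fun i _ => by ring
  rw [hfun]
  exact h

lemma hasSum_key {n : ℕ} {o : MvPolynomial (Fin n) ℝ} {π : (Fin n → ℕ) → ℝ} {D : ℕ}
    (hmom : HasRatMoments o π D) (p : MvPolynomial (Fin n) ℝ) (hp : p.totalDegree ≤ D) :
    HasSum (fun x : Fin n → ℕ =>
        eval (fun k => (x k : ℝ)) p / eval (fun k => (x k : ℝ)) o * π x)
      (∑ β ∈ p.support, coeff β p * ratMoment o π β) := by
  have h := hasSum_comb hmom p.support (fun β => coeff β p) (fun β => β)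
    (fun β hβ => by
      have h1 := le_totalDegree hβ
      rw [Finsupp.sum_fintype _ _ (fun _ => rfl)] at h1
      exact h1.trans hp)
  have hfun : ∀ x : Fin n → ℕ, eval (fun k => (x k : ℝ)) p
      = ∑ β ∈ p.support, coeff β p * ∏ k, (x k : ℝ) ^ β k := fun x => eval_eq' _ p
  simp only [hfun]
  exact h

lemma momentPoly_totalDegree_le {n m : ℕ} (v : Fin m → Fin n → ℤ)
    (s : Fin m → MvPolynomial (Fin n) ℝ) {da : ℕ} (hda : ∀ j, (s j).totalDegree ≤ da)
    (α : Fin n →₀ ℕ) : (momentPoly v s α).totalDegree ≤ da + ∑ i, α i := by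
  refine (totalDegree_finset_sum _ _).trans (Finset.sup_le fun j _ => ?_)
  refine (totalDegree_mul _ _).trans (add_le_add (hda j) ?_)
  have h1 : (∏ i, (X i + C ((v j i : ℝ))) ^ α i : MvPolynomial (Fin n) ℝ).totalDegree
      ≤ ∑ i, α i := by
    refine (totalDegree_finset_prod _ _).trans (Finset.sum_le_sum fun i _ => ?_)
    refine (totalDegree_pow _ _).trans ?_
    calc α i * (X i + C ((v j i : ℝ))).totalDegree ≤ α i * 1 := by
          refine Nat.mul_le_mul_left _ ((totalDegree_add _ _).trans (max_le ?_ ?_))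
          · exact le_of_eq (totalDegree_X _)
          · exact le_of_eq ((totalDegree_C _).trans rfl) |>.trans (Nat.zero_le 1)
      _ = α i := Nat.mul_one _
  have h2 : (∏ i, (X i : MvPolynomial (Fin n) ℝ) ^ α i).totalDegree ≤ ∑ i, α i := by
    refine (totalDegree_finset_prod _ _).trans (Finset.sum_le_sum fun i _ => ?_)
    refine (totalDegree_pow _ _).trans ?_
    simp [totalDegree_X]
  calc ((∏ i, (X i + C ((v j i : ℝ))) ^ α i : MvPolynomial (Fin n) ℝ)
        - ∏ i, (X i : MvPolynomial (Fin n) ℝ) ^ α i).totalDegree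
      ≤ max _ _ := totalDegree_sub _ _
    _ ≤ ∑ i, α i := max_le h1 h2

lemma stepC {n m : ℕ} (S : Set (Fin n → ℕ))
    (v : Fin m → Fin n → ℤ) (s : Fin m → MvPolynomial (Fin n) ℝ)
    (o : MvPolynomial (Fin n) ℝ) (d da : ℕ)
    (hda : ∀ j, (s j).totalDegree ≤ da)
    (a : Fin m → (Fin n → ℕ) → ℝ)
    (ha : ∀ j x, a j x = eval (fun i => (x i : ℝ)) (s j) / eval (fun i => (x i : ℝ)) o)
    (ha_nonneg : ∀ j, ∀ x ∈ S, 0 ≤ a j x)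
    (hclosed : ∀ x ∈ S, ∀ j, a j x ≠ 0 → ∃ y ∈ S, ∀ i, (y i : ℤ) = (x i : ℤ) + v j i)
    (q : (Fin n → ℕ) → (Fin n → ℕ) → ℝ)
    (hq_offdiag : ∀ x y, y ≠ x →
      q x y = ∑ j ∈ Finset.univ.filter (fun j => ∀ i, (y i : ℤ) = (x i : ℤ) + v j i), a j x)
    (hq_diag : ∀ x, q x x = -∑ j, a j x)
    (π : (Fin n → ℕ) → ℝ) (hπ_nonneg : ∀ x, 0 ≤ π x) (hπ_supp : ∀ x ∉ S, π x = 0)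
    (hπ_stat : ∀ x ∈ S, HasSum (fun y => π y * q y x) 0)
    (hmom : HasRatMoments o π (d + 1))
    (α : Fin n →₀ ℕ) (hα : da + ∑ i, α i ≤ d + 1) :
    ∑' x : Fin n → ℕ,
        eval (fun i => (x i : ℝ)) (momentPoly v s α) / eval (fun i => (x i : ℝ)) o * π x
      = ∑' x : Fin n → ℕ,
          π x * (∑ j ∈ Finset.univ.filter (fun j => ∀ i, v j i = 0), a j x)
            * ∏ i, (x i : ℝ) ^ α i := by
  classical
  have hπS : ∀ x : Fin n → ℕ, π x ≠ 0 → x ∈ S := by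
    intro x hx; by_contra h; exact hx (hπ_supp x h)
  have hmon_nonneg : ∀ (β : Fin n →₀ ℕ) (x : Fin n → ℕ), 0 ≤ ∏ i, (x i : ℝ) ^ β i :=
    fun β x => Finset.prod_nonneg fun i _ => pow_nonneg (Nat.cast_nonneg _) _
  -- the finite set of possible targets from x
  set A : (Fin n → ℕ) → Finset (Fin n → ℕ) :=
    fun x => insert x ((Finset.univ : Finset (Fin m)).image
      fun j => fun i => ((x i : ℤ) + v j i).toNat) with hA
  have hself : ∀ x : Fin n → ℕ, x ∈ A x := by
    intro x; simp only [hA]; exact Finset.mem_insert_self _ _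
  have hmatch : ∀ (x y : Fin n → ℕ) (j : Fin m),
      (∀ i, (y i : ℤ) = (x i : ℤ) + v j i) → y = fun i => ((x i : ℤ) + v j i).toNat := by
    intro x y j h; funext i; have := h i; omega
  have hoff : ∀ x : Fin n → ℕ, ∀ y ∉ A x, π x * q x y * ∏ i, (y i : ℝ) ^ α i = 0 := by
    intro x y hy
    have hyx : y ≠ x := fun h => hy (by rw [h]; exact hself x)
    have hq0 : q x y = 0 := by
      rw [hq_offdiag x y hyx]
      refine Finset.sum_eq_zero fun j hj => ?_
      exfalso; apply hy
      rw [hmatch x y j (Finset.mem_filter.mp hj).2]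
      simp only [hA]
      exact Finset.mem_insert_of_mem (Finset.mem_image.mpr ⟨j, Finset.mem_univ j, rfl⟩)
    rw [hq0, mul_zero, zero_mul]
  -- basic summable families
  have hsum_mon : ∀ j : Fin m, Summable (fun x : Fin n → ℕ =>
      π x * a j x * ∏ i, (x i : ℝ) ^ α i) := by
    intro j
    have hdeg : (s j * ∏ i, (X i : MvPolynomial (Fin n) ℝ) ^ α i).totalDegree ≤ d + 1 := by
      refine le_trans ((totalDegree_mul _ _).trans (add_le_add (hda j) ?_)) hα
      refine (totalDegree_finset_prod _ _).trans (Finset.sum_le_sum fun i _ => ?_)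
      exact (totalDegree_pow _ _).trans (by simp [totalDegree_X])
    refine (hasSum_key hmom _ hdeg).summable.congr fun x => ?_
    have he : eval (fun i => (x i : ℝ)) (s j * ∏ i, (X i : MvPolynomial (Fin n) ℝ) ^ α i)
        = eval (fun i => (x i : ℝ)) (s j) * ∏ i, (x i : ℝ) ^ α i := by
      simp
    rw [he, ha]
    ring
  have hsum_f1 : Summable (fun x : Fin n → ℕ =>
      eval (fun i => (x i : ℝ)) (momentPoly v s α) / eval (fun i => (x i : ℝ)) o * π x) :=
    (hasSum_key hmom _ ((momentPoly_totalDegree_le v s hda α).trans hα)).summable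
  have hsum_f2 : Summable (fun x : Fin n → ℕ =>
      π x * (∑ j ∈ Finset.univ.filter (fun j => ∀ i, v j i = 0), a j x)
        * ∏ i, (x i : ℝ) ^ α i) := by
    have h := summable_sum (s := Finset.univ.filter (fun j : Fin m => ∀ i, v j i = 0))
      (fun j _ => hsum_mon j)
    refine h.congr fun x => ?_
    rw [Finset.mul_sum, Finset.sum_mul]
  have hdiag : Summable (fun x : Fin n → ℕ => π x * q x x * ∏ i, (x i : ℝ) ^ α i) := by
    have h := (summable_sum (s := (Finset.univ : Finset (Fin m))) fun j _ => hsum_mon j).neg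
    refine h.congr fun x => ?_
    rw [hq_diag x, mul_neg, neg_mul, neg_inj, Finset.mul_sum, Finset.sum_mul]
  -- pointwise identity for the first summand
  have hf1eq : ∀ x : Fin n → ℕ,
      eval (fun i => (x i : ℝ)) (momentPoly v s α) / eval (fun i => (x i : ℝ)) o * π x
      = ∑ j, π x * a j x * ((∏ i, ((x i : ℝ) + (v j i : ℝ)) ^ α i)
          - ∏ i, (x i : ℝ) ^ α i) := by
    intro x
    have heval : eval (fun i => (x i : ℝ)) (momentPoly v s α)
        = ∑ j, eval (fun i => (x i : ℝ)) (s j) * ((∏ i, ((x i : ℝ) + (v j i : ℝ)) ^ α i)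
            - ∏ i, (x i : ℝ) ^ α i) := by
      simp [momentPoly]
    rw [heval, Finset.sum_div, Finset.sum_mul]
    refine Finset.sum_congr rfl fun j _ => ?_
    rw [ha]
    ring
  -- row sums
  have hC1 : ∀ x : Fin n → ℕ, HasSum (fun y => π x * q x y * ∏ i, (y i : ℝ) ^ α i)
      (eval (fun i => (x i : ℝ)) (momentPoly v s α) / eval (fun i => (x i : ℝ)) o * π x
        - π x * (∑ j ∈ Finset.univ.filter (fun j => ∀ i, v j i = 0), a j x)
            * ∏ i, (x i : ℝ) ^ α i) := by
    intro x
    by_cases hπx : π x = 0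
    · simpa [hπx] using (hasSum_zero (α := ℝ) (β := Fin n → ℕ))
    · have hxS : x ∈ S := hπS x hπx
      have herase : ∀ y ∈ (A x).erase x, π x * q x y * ∏ i, (y i : ℝ) ^ α i
          = ∑ j, if (∀ i, (y i : ℤ) = (x i : ℤ) + v j i)
              then π x * a j x * ∏ i, (y i : ℝ) ^ α i else 0 := by
        intro y hy
        rw [hq_offdiag x y (Finset.ne_of_mem_erase hy), Finset.sum_filter,
          Finset.mul_sum, Finset.sum_mul]
        exact Finset.sum_congr rfl fun j _ => by split_ifs <;> simp
      have hj : ∀ j : Fin m,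
          (∑ y ∈ (A x).erase x, if (∀ i, (y i : ℤ) = (x i : ℤ) + v j i)
            then π x * a j x * ∏ i, (y i : ℝ) ^ α i else 0)
          = if (¬ ∀ i, v j i = 0)
              then π x * a j x * ∏ i, ((x i : ℝ) + (v j i : ℝ)) ^ α i else 0 := by
        intro j
        by_cases haj : a j x = 0
        · simp [haj]
        · obtain ⟨y₀, hy₀S, hy₀⟩ := hclosed x hxS j haj
          by_cases hL : ∀ i, v j i = 0
          · rw [if_neg (not_not_intro hL)]
            refine Finset.sum_eq_zero fun y hy => ?_
            rw [if_neg]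
            intro hmy
            exact (Finset.ne_of_mem_erase hy)
              (by funext i; have h1 := hmy i; have h2 := hL i; omega)
          · rw [if_pos hL]
            have hy₀x : y₀ ≠ x := by
              intro h
              obtain ⟨i, hi⟩ := not_forall.mp hL
              apply hi
              have h2 := hy₀ i
              rw [h] at h2
              omega
            have hy₀A : y₀ ∈ (A x).erase x := by
              refine Finset.mem_erase.mpr ⟨hy₀x, ?_⟩
              rw [hmatch x y₀ j hy₀]
              simp only [hA]
              exact Finset.mem_insert_of_mem (Finset.mem_image.mpr ⟨j, Finset.mem_univ j, rfl⟩)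
            rw [Finset.sum_eq_single_of_mem y₀ hy₀A ?_]
            · rw [if_pos hy₀]
              have hsh : (∏ i, (y₀ i : ℝ) ^ α i) = ∏ i, ((x i : ℝ) + (v j i : ℝ)) ^ α i := by
                refine Finset.prod_congr rfl fun i _ => ?_
                have h := hy₀ i
                have h2 : (y₀ i : ℝ) = (x i : ℝ) + (v j i : ℝ) := by exact_mod_cast h
                rw [h2]
              rw [hsh]
            · intro y hy hne
              rw [if_neg]
              intro hmy
              exact hne (by funext i; have h1 := hmy i; have h2 := hy₀ i; omega)
      have hgoal : ∀ j : Fin m,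
          -(π x * a j x * ∏ i, (x i : ℝ) ^ α i)
            + (if (¬ ∀ i, v j i = 0)
                then π x * a j x * ∏ i, ((x i : ℝ) + (v j i : ℝ)) ^ α i else 0)
          = π x * a j x * ((∏ i, ((x i : ℝ) + (v j i : ℝ)) ^ α i) - ∏ i, (x i : ℝ) ^ α i)
            - (if (∀ i, v j i = 0) then π x * a j x * ∏ i, (x i : ℝ) ^ α i else 0) := by
        intro j
        by_cases hL : ∀ i, v j i = 0
        · have hsh : (∏ i, ((x i : ℝ) + (v j i : ℝ)) ^ α i) = ∏ i, (x i : ℝ) ^ α i :=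
            Finset.prod_congr rfl fun i _ => by rw [hL i]; norm_num
          rw [if_neg (not_not_intro hL), if_pos hL, hsh]
          ring
        · rw [if_pos hL, if_neg hL]
          ring
      have e1 : π x * (-∑ j, a j x) * (∏ i, (x i : ℝ) ^ α i)
          = ∑ j, -(π x * a j x * ∏ i, (x i : ℝ) ^ α i) := by
        rw [show π x * (-∑ j, a j x) * (∏ i, (x i : ℝ) ^ α i)
            = -((∑ j, a j x) * (π x * ∏ i, (x i : ℝ) ^ α i)) from by ring,
          Finset.sum_mul, ← Finset.sum_neg_distrib]
        exact Finset.sum_congr rfl fun j _ => by ring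
      have e2 : π x * (∑ j ∈ Finset.univ.filter (fun j => ∀ i, v j i = 0), a j x)
            * ∏ i, (x i : ℝ) ^ α i
          = ∑ j, if (∀ i, v j i = 0) then π x * a j x * ∏ i, (x i : ℝ) ^ α i else 0 := by
        rw [Finset.sum_filter, Finset.mul_sum, Finset.sum_mul]
        exact Finset.sum_congr rfl fun j _ => by split_ifs <;> simp
      have hval : (∑ y ∈ A x, π x * q x y * ∏ i, (y i : ℝ) ^ α i)
          = eval (fun i => (x i : ℝ)) (momentPoly v s α) / eval (fun i => (x i : ℝ)) o * π x
            - π x * (∑ j ∈ Finset.univ.filter (fun j => ∀ i, v j i = 0), a j x)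
                * ∏ i, (x i : ℝ) ^ α i := by
        rw [← Finset.add_sum_erase _ _ (hself x),
          Finset.sum_congr rfl herase, Finset.sum_comm, hq_diag x, hf1eq x,
          Finset.sum_congr rfl (fun j (_ : j ∈ (Finset.univ : Finset (Fin m))) => hj j),
          e1, e2, ← Finset.sum_add_distrib, ← Finset.sum_sub_distrib]
        exact Finset.sum_congr rfl fun j _ => hgoal j
      have hs := hasSum_sum_of_ne_finset_zero (L := SummationFilter.unconditional _) (hoff x)
      rwa [hval] at hs
  -- column sums
  have hC2 : ∀ y : Fin n → ℕ, HasSum (fun x => π x * q x y * ∏ i, (y i : ℝ) ^ α i) 0 := by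
    intro y
    by_cases hyS : y ∈ S
    · simpa using (hπ_stat y hyS).mul_right (∏ i, (y i : ℝ) ^ α i)
    · have hzero : ∀ x : Fin n → ℕ, π x * q x y * ∏ i, (y i : ℝ) ^ α i = 0 := by
        intro x
        by_cases hπx : π x = 0
        · rw [hπx, zero_mul, zero_mul]
        · have hxS := hπS x hπx
          have hyx : y ≠ x := fun h => hyS (h ▸ hxS)
          have hq0 : q x y = 0 := by
            rw [hq_offdiag x y hyx]
            refine Finset.sum_eq_zero fun j hj => ?_
            by_contra haj
            obtain ⟨y', hy'S, hy'⟩ := hclosed x hxS j haj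
            have hyy' : y = y' := by
              funext i
              have h1 := (Finset.mem_filter.mp hj).2 i
              have h2 := hy' i
              omega
            exact hyS (hyy' ▸ hy'S)
          rw [hq0, mul_zero, zero_mul]
      have hfn : (fun x : Fin n → ℕ => π x * q x y * ∏ i, (y i : ℝ) ^ α i)
          = fun _ => 0 := funext hzero
      rw [hfn]
      exact hasSum_zero
  -- summability on the product
  have hFD : Summable (fun p : (Fin n → ℕ) × (Fin n → ℕ) =>
      if p.2 = p.1 then π p.1 * q p.1 p.2 * ∏ i, (p.2 i : ℝ) ^ α i else 0) := by
    refine (Function.Injective.summable_iff (g := fun x : Fin n → ℕ => (x, x))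
      (fun a b h => congrArg Prod.fst h) ?_).mp ?_
    · intro p hp
      rw [if_neg]
      intro h
      exact hp ⟨p.1, by obtain ⟨a, b⟩ := p; simp only [Prod.mk.injEq]; exact ⟨trivial, h.symm⟩⟩
    · refine hdiag.congr fun x => ?_
      simp
  have hFG : Summable (fun p : (Fin n → ℕ) × (Fin n → ℕ) =>
      if p.2 = p.1 then 0 else π p.1 * q p.1 p.2 * ∏ i, (p.2 i : ℝ) ^ α i) := by
    refine (summable_prod_of_nonneg ?_).mpr ⟨?_, ?_⟩
    · intro p
      have hgoal : (0:ℝ) ≤ if p.2 = p.1 then 0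
          else π p.1 * q p.1 p.2 * ∏ i, (p.2 i : ℝ) ^ α i := by
        by_cases h : p.2 = p.1
        · rw [if_pos h]
        · rw [if_neg h]
          by_cases hπx : π p.1 = 0
          · rw [hπx, zero_mul, zero_mul]
          · have hxS := hπS _ hπx
            refine mul_nonneg (mul_nonneg (hπ_nonneg _) ?_) (hmon_nonneg α p.2)
            rw [hq_offdiag p.1 p.2 h]
            exact Finset.sum_nonneg fun j hj => ha_nonneg j _ hxS
      exact hgoal
    · intro x
      refine summable_of_ne_finset_zero (s := A x) fun y hy => ?_
      by_cases h : y = x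
      · rw [if_pos h]
      · rw [if_neg h]
        exact hoff x y hy
    · have hGx : ∀ x : Fin n → ℕ, HasSum (fun y => if y = x then 0
          else π x * q x y * ∏ i, (y i : ℝ) ^ α i)
          ((eval (fun i => (x i : ℝ)) (momentPoly v s α) / eval (fun i => (x i : ℝ)) o * π x
            - π x * (∑ j ∈ Finset.univ.filter (fun j => ∀ i, v j i = 0), a j x)
                * ∏ i, (x i : ℝ) ^ α i)
            - π x * q x x * ∏ i, (x i : ℝ) ^ α i) := by
        intro x
        have h2 : HasSum (fun y => if y = x then π x * q x y * ∏ i, (y i : ℝ) ^ α i else 0)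
            (π x * q x x * ∏ i, (x i : ℝ) ^ α i) := by
          have heq : (fun y => if y = x then π x * q x y * ∏ i, (y i : ℝ) ^ α i else 0)
              = fun y => if y = x then π x * q x x * ∏ i, (x i : ℝ) ^ α i else 0 := by
            funext y
            by_cases h : y = x
            · subst h; rfl
            · rw [if_neg h, if_neg h]
          rw [heq]
          exact hasSum_ite_eq x _
        have heq2 : (fun y => (π x * q x y * ∏ i, (y i : ℝ) ^ α i)
              - (if y = x then π x * q x y * ∏ i, (y i : ℝ) ^ α i else 0))
            = fun y => if y = x then 0 else π x * q x y * ∏ i, (y i : ℝ) ^ α i := by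
          funext y
          by_cases h : y = x
          · rw [if_pos h, if_pos h, sub_self]
          · rw [if_neg h, if_neg h, sub_zero]
        exact heq2 ▸ ((hC1 x).sub h2)
      refine ((hsum_f1.sub hsum_f2).sub hdiag).congr fun x => ?_
      exact ((hGx x).tsum_eq).symm
  have hF : Summable (fun p : (Fin n → ℕ) × (Fin n → ℕ) =>
      π p.1 * q p.1 p.2 * ∏ i, (p.2 i : ℝ) ^ α i) := by
    refine ((hFD.add hFG).congr fun p => ?_)
    by_cases h : p.2 = p.1 <;> simp [h]
  -- Fubini and conclusion
  have hcomm : (∑' (y : Fin n → ℕ) (x : Fin n → ℕ), π x * q x y * ∏ i, (y i : ℝ) ^ α i)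
      = ∑' (x : Fin n → ℕ) (y : Fin n → ℕ), π x * q x y * ∏ i, (y i : ℝ) ^ α i := by
    refine Summable.tsum_comm' ?_ ?_ ?_
    · exact hF
    · exact fun x => (hC1 x).summable
    · exact fun y => (hC2 y).summable
  have hzero : (∑' (y : Fin n → ℕ) (x : Fin n → ℕ), π x * q x y * ∏ i, (y i : ℝ) ^ α i)
      = 0 := (tsum_congr fun y => (hC2 y).tsum_eq).trans tsum_zero
  have hXY : (∑' (x : Fin n → ℕ) (y : Fin n → ℕ), π x * q x y * ∏ i, (y i : ℝ) ^ α i)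
      = ∑' x : Fin n → ℕ,
        (eval (fun i => (x i : ℝ)) (momentPoly v s α) / eval (fun i => (x i : ℝ)) o * π x
          - π x * (∑ j ∈ Finset.univ.filter (fun j => ∀ i, v j i = 0), a j x)
              * ∏ i, (x i : ℝ) ^ α i) := tsum_congr fun x => (hC1 x).tsum_eq
  have hmain : (∑' x : Fin n → ℕ,
      (eval (fun i => (x i : ℝ)) (momentPoly v s α) / eval (fun i => (x i : ℝ)) o * π x
        - π x * (∑ j ∈ Finset.univ.filter (fun j => ∀ i, v j i = 0), a j x)
            * ∏ i, (x i : ℝ) ^ α i)) = 0 := by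
    rw [← hXY, ← hcomm, hzero]
  rw [Summable.tsum_sub hsum_f1 hsum_f2] at hmain
  exact sub_eq_zero.mp hmain

lemma prod_pow_add {n : ℕ} (x : Fin n → ℕ) (γ δ : Fin n →₀ ℕ) :
    (∏ k, (x k : ℝ) ^ (γ + δ) k) = (∏ k, (x k : ℝ) ^ γ k) * ∏ k, (x k : ℝ) ^ δ k := by
  rw [← Finset.prod_mul_distrib]
  exact Finset.prod_congr rfl fun k _ => by rw [Finsupp.add_apply, pow_add]

lemma prod_pow_single {n : ℕ} (x : Fin n → ℕ) (i₀ : Fin n) :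
    (∏ k, (x k : ℝ) ^ (Finsupp.single i₀ 1) k) = (x i₀ : ℝ) := by
  rw [Finset.prod_eq_single i₀ (fun k _ hk => by
      rw [Finsupp.single_apply, if_neg (fun h => hk h.symm), pow_zero])
    (fun h => absurd (Finset.mem_univ i₀) h)]
  rw [Finsupp.single_eq_same, pow_one]

lemma sum_single_one {n : ℕ} (i₀ : Fin n) :
    (∑ k, (Finsupp.single i₀ 1 : Fin n →₀ ℕ) k) = 1 := by
  rw [Finset.sum_eq_single i₀ (fun k _ hk => by
      rw [Finsupp.single_apply, if_neg (fun h => hk h.symm)])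
    (fun h => absurd (Finset.mem_univ i₀) h)]
  exact Finsupp.single_eq_same

/-- **Statement 4** (Theorem 1 of the paper).  For a reaction network on `S ⊆ ℕⁿ` with
rational propensities `aⱼ = sⱼ/o` and `d ≥ d_o`, every stationary solution `π` of the
CME with finite rational moments of order up to `d + 1` has its vector of rational
moments `z = (z_β)` in the spectrahedron `𝓔^d`. -/
theorem stationary_moments_in_spectrahedron
    {n m : ℕ} (S : Set (Fin n → ℕ))
    (v : Fin m → Fin n → ℤ) (s : Fin m → MvPolynomial (Fin n) ℝ)
    (o : MvPolynomial (Fin n) ℝ) (d da : ℕ)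
    (ho_pos : ∀ x ∈ S, 0 < eval (fun i => (x i : ℝ)) o)
    (hdo : o.totalDegree ≤ d)
    (hda : ∀ j, (s j).totalDegree ≤ da)
    (a : Fin m → (Fin n → ℕ) → ℝ)
    (ha : ∀ j x, a j x = eval (fun i => (x i : ℝ)) (s j) / eval (fun i => (x i : ℝ)) o)
    (ha_nonneg : ∀ j, ∀ x ∈ S, 0 ≤ a j x)
    (hclosed : ∀ x ∈ S, ∀ j, a j x ≠ 0 → ∃ y ∈ S, ∀ i, (y i : ℤ) = (x i : ℤ) + v j i)
    (q : (Fin n → ℕ) → (Fin n → ℕ) → ℝ)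
    (hq_offdiag : ∀ x y, y ≠ x →
      q x y = ∑ j ∈ Finset.univ.filter (fun j => ∀ i, (y i : ℤ) = (x i : ℤ) + v j i), a j x)
    (hq_diag : ∀ x, q x x = -∑ j, a j x)
    (π : (Fin n → ℕ) → ℝ) (hπ_nonneg : ∀ x, 0 ≤ π x) (hπ_supp : ∀ x ∉ S, π x = 0)
    (hπ_mass : HasSum π 1)
    (hπ_stat : ∀ x ∈ S, HasSum (fun y => π y * q y x) 0)
    (hmom : HasRatMoments o π (d + 1)) :
    (fun β => ratMoment o π β) ∈ spectrahedron v s o da d := by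
  classical
  refine ⟨?_, ?_, ?_, ?_⟩
  -- (1) normalisation
  · show (∑ β ∈ o.support, coeff β o * ratMoment o π β) = 1
    have h := hasSum_key hmom o (hdo.trans (Nat.le_succ d))
    have h2 : (fun x : Fin n → ℕ =>
        eval (fun k => (x k : ℝ)) o / eval (fun k => (x k : ℝ)) o * π x) = π := by
      funext x
      by_cases hx : x ∈ S
      · rw [div_self (ho_pos x hx).ne', one_mul]
      · rw [hπ_supp x hx, mul_zero]
    rw [h2] at h
    exact h.unique hπ_mass
  -- (2) moment equations
  · intro α hα
    show (∑ β ∈ (momentPoly v s α).support,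
      coeff β (momentPoly v s α) * ratMoment o π β) = 0
    have hcast : (∑ i, ((α i : ℕ) : ℤ)) = ((∑ i, α i : ℕ) : ℤ) := by push_cast; rfl
    rw [hcast] at hα
    have hα' : da + ∑ i, α i ≤ d + 1 := by omega
    -- self-loop propensities vanish on the support of π
    have hsum_loop : Summable (fun x : Fin n → ℕ =>
        π x * ∑ j ∈ Finset.univ.filter (fun j => ∀ i, v j i = 0), a j x) := by
      have hsj : ∀ j : Fin m, Summable (fun x : Fin n → ℕ => π x * a j x) := fun j =>
        (hasSum_key hmom (s j) ((hda j).trans (by omega))).summable.congr fun x => by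
          rw [ha]; ring
      have h := summable_sum (s := Finset.univ.filter (fun j : Fin m => ∀ i, v j i = 0))
        (fun j _ => hsj j)
      exact h.congr fun x => (Finset.mul_sum _ _ _).symm
    have hnn : ∀ x : Fin n → ℕ,
        0 ≤ π x * ∑ j ∈ Finset.univ.filter (fun j => ∀ i, v j i = 0), a j x := by
      intro x
      by_cases hx : x ∈ S
      · exact mul_nonneg (hπ_nonneg x) (Finset.sum_nonneg fun j _ => ha_nonneg j x hx)
      · rw [hπ_supp x hx, zero_mul]
    have hzero : ∀ x : Fin n → ℕ,
        π x * ∑ j ∈ Finset.univ.filter (fun j => ∀ i, v j i = 0), a j x = 0 := by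
      have h0 := stepC S v s o d da hda a ha ha_nonneg hclosed q hq_offdiag hq_diag π
        hπ_nonneg hπ_supp hπ_stat hmom 0 (by simpa using (Nat.le_add_right da _).trans hα')
      have hmp0 : momentPoly v s (0 : Fin n →₀ ℕ) = 0 := by
        simp [momentPoly]
      rw [hmp0] at h0
      simp only [map_zero, zero_div, zero_mul, tsum_zero, Finsupp.coe_zero, Pi.zero_apply,
        pow_zero, Finset.prod_const_one, mul_one] at h0
      intro x
      refine le_antisymm ?_ (hnn x)
      have hle := Summable.le_tsum hsum_loop x (fun y _ => hnn y)
      rw [← h0] at hle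
      exact hle
    have hstep := stepC S v s o d da hda a ha ha_nonneg hclosed q hq_offdiag hq_diag π
      hπ_nonneg hπ_supp hπ_stat hmom α hα'
    have hrhs : (∑' x : Fin n → ℕ,
        π x * (∑ j ∈ Finset.univ.filter (fun j => ∀ i, v j i = 0), a j x)
          * ∏ i, (x i : ℝ) ^ α i) = 0 := by
      refine (tsum_congr fun x => ?_).trans tsum_zero
      rw [hzero x, zero_mul]
    have hkey := hasSum_key hmom (momentPoly v s α)
      ((momentPoly_totalDegree_le v s hda α).trans hα')
    rw [← hkey.tsum_eq, hstep]
    exact hrhs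
  -- (3) moment matrix
  · intro g hg
    show 0 ≤ ∑ α ∈ g.support, ∑ β ∈ g.support, coeff α g * coeff β g * ratMoment o π (α + β)
    have hb : ∀ p ∈ g.support ×ˢ g.support,
        (∑ k, (p.1 + p.2 : Fin n →₀ ℕ) k) ≤ d + 1 := by
      intro p hp
      obtain ⟨h1, h2⟩ := Finset.mem_product.mp hp
      have e1 := le_totalDegree h1
      rw [Finsupp.sum_fintype _ _ (fun _ => rfl)] at e1
      have e2 := le_totalDegree h2
      rw [Finsupp.sum_fintype _ _ (fun _ => rfl)] at e2
      have hsp : (∑ k, (p.1 + p.2 : Fin n →₀ ℕ) k) = (∑ k, p.1 k) + ∑ k, p.2 k := by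
        simp [Finsupp.add_apply, Finset.sum_add_distrib]
      rw [hsp]
      omega
    have h := hasSum_comb hmom (g.support ×ˢ g.support)
      (fun p => coeff p.1 g * coeff p.2 g) (fun p => p.1 + p.2) hb
    rw [← Finset.sum_product', ← h.tsum_eq]
    refine tsum_nonneg fun x => ?_
    have hin : (∑ p ∈ g.support ×ˢ g.support,
        (coeff p.1 g * coeff p.2 g) * ∏ k, (x k : ℝ) ^ (p.1 + p.2) k)
        = (eval (fun k => (x k : ℝ)) g) ^ 2 := by
      rw [Finset.sum_product, sq, eval_eq' (fun k => (x k : ℝ)) g, Finset.sum_mul_sum]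
      refine Finset.sum_congr rfl fun α _ => Finset.sum_congr rfl fun β _ => ?_
      rw [prod_pow_add]
      ring
    rw [hin]
    by_cases hx : x ∈ S
    · exact mul_nonneg (div_nonneg (sq_nonneg _) (ho_pos x hx).le) (hπ_nonneg x)
    · rw [hπ_supp x hx, mul_zero]
  -- (4) localising matrices
  · intro i₀ g hg
    show 0 ≤ ∑ α ∈ g.support, ∑ β ∈ g.support,
      coeff α g * coeff β g * ratMoment o π (α + β + Finsupp.single i₀ 1)
    have hb : ∀ p ∈ g.support ×ˢ g.support,
        (∑ k, (p.1 + p.2 + Finsupp.single i₀ 1 : Fin n →₀ ℕ) k) ≤ d + 1 := by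
      intro p hp
      obtain ⟨h1, h2⟩ := Finset.mem_product.mp hp
      have e1 := le_totalDegree h1
      rw [Finsupp.sum_fintype _ _ (fun _ => rfl)] at e1
      have e2 := le_totalDegree h2
      rw [Finsupp.sum_fintype _ _ (fun _ => rfl)] at e2
      have hsp : (∑ k, (p.1 + p.2 + Finsupp.single i₀ 1 : Fin n →₀ ℕ) k)
          = ((∑ k, p.1 k) + ∑ k, p.2 k)
            + ∑ k, (Finsupp.single i₀ 1 : Fin n →₀ ℕ) k := by
        simp [Finsupp.add_apply, Finset.sum_add_distrib]
      rw [hsp, sum_single_one]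
      omega
    have h := hasSum_comb hmom (g.support ×ˢ g.support)
      (fun p => coeff p.1 g * coeff p.2 g) (fun p => p.1 + p.2 + Finsupp.single i₀ 1) hb
    rw [← Finset.sum_product', ← h.tsum_eq]
    refine tsum_nonneg fun x => ?_
    have hin : (∑ p ∈ g.support ×ˢ g.support,
        (coeff p.1 g * coeff p.2 g)
          * ∏ k, (x k : ℝ) ^ (p.1 + p.2 + Finsupp.single i₀ 1 : Fin n →₀ ℕ) k)
        = (eval (fun k => (x k : ℝ)) g) ^ 2 * (x i₀ : ℝ) := by
      rw [Finset.sum_product, sq, eval_eq' (fun k => (x k : ℝ)) g, Finset.sum_mul_sum,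
        Finset.sum_mul]
      refine Finset.sum_congr rfl fun α _ => ?_
      rw [Finset.sum_mul]
      refine Finset.sum_congr rfl fun β _ => ?_
      rw [prod_pow_add, prod_pow_add, prod_pow_single]
      ring
    rw [hin]
    by_cases hx : x ∈ S
    · refine mul_nonneg (div_nonneg (mul_nonneg (sq_nonneg _) (Nat.cast_nonneg _))
        (ho_pos x hx).le) (hπ_nonneg x)
    · rw [hπ_supp x hx, mul_zero]
end

section
/- (Lemma: outer approximations of P_{w,c}.) Let Q be a rate matrix on a countable state space S, w : S → [0,∞) a norm-like function, and c a constant. If π belongs to P_{w,c}, then its restriction π_{|r} to the truncation S_r belongs to P^r_{w,c} for every r > 0; in particular π_{|r} ≥ 0, π_{|r}(x) = 0 for x ∉ S_r, π_{|r}Q(x) = 0 for every x ∈ N_r, 1 − c/r ≤ ∑_{x∈S} π_{|r}(x) ≤ 1, and ∑_{x∈S} w(x)π_{|r}(x) ≤ c. -/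
open scoped Classical

open Filter

/-- The set `P_{w,c}` of stationary solutions `π` of the CME for the rate matrix `q`
(`π ≥ 0`, `∑ π = 1`, `πQ(x) = 0` for all `x`) satisfying the moment bound `⟨w⟩ ≤ c`. -/
def statSet {σ : Type*} (q : σ → σ → ℝ) (w : σ → ℝ) (c : ℝ) : Set (σ → ℝ) :=
  {π | (∀ x, 0 ≤ π x) ∧ HasSum π 1 ∧ (∀ x, HasSum (fun y => π y * q y x) 0) ∧
    Summable (fun x => w x * π x) ∧ (∑' x, w x * π x) ≤ c}

/-- The truncation `S_r = {x : w(x) < r}`. -/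
def truncSet {σ : Type*} (w : σ → ℝ) (r : ℝ) : Set σ := {x | w x < r}

/-- The set `N_r` of states of `S_r` whose stationary equation only involves states of
`S_r`. -/
def eqStates {σ : Type*} (q : σ → σ → ℝ) (w : σ → ℝ) (r : ℝ) : Set σ :=
  {x | w x < r ∧ ∀ z, q z x ≠ 0 → w z < r}

/-- The outer approximation `P^r_{w,c}`: all `π^r ≥ 0` vanishing outside `S_r` with
`π^r Q(x) = 0` for `x ∈ N_r`, `1 - c/r ≤ ∑ π^r ≤ 1` and `∑ w π^r ≤ c`. -/
def truncPolytope {σ : Type*} (q : σ → σ → ℝ) (w : σ → ℝ) (c r : ℝ) : Set (σ → ℝ) :=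
  {ρ | (∀ x, 0 ≤ ρ x) ∧ (∀ x, ¬ w x < r → ρ x = 0) ∧
    (∀ x ∈ eqStates q w r, ∑' y, ρ y * q y x = 0) ∧
    1 - c / r ≤ ∑' x, ρ x ∧ (∑' x, ρ x) ≤ 1 ∧ (∑' x, w x * ρ x) ≤ c}

/-- The total variation distance `‖ρ₁ - ρ₂‖ = sup_{A ⊆ S} |∑_{x ∈ A} (ρ₁(x) - ρ₂(x))|`. -/
noncomputable def tvDist {σ : Type*} (ρ₁ ρ₂ : σ → ℝ) : ℝ :=
  ⨆ A : Set σ, |∑' x : A, (ρ₁ x - ρ₂ x)|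

/-- Lemma: outer approximations of `P_{w,c}`.
Let `Q` be a rate matrix on a countable state space, `w` norm-like and `c` a constant.
If `π ∈ P_{w,c}`, then its restriction `π_{|r}` to the truncation `S_r` belongs to
`P^r_{w,c}` for every `r > 0`; in particular `π_{|r} ≥ 0`, `π_{|r}` vanishes off `S_r`,
`π_{|r} Q(x) = 0` for `x ∈ N_r`, `1 - c/r ≤ ∑ π_{|r} ≤ 1`, and `∑ w π_{|r} ≤ c`. -/
theorem restriction_mem_truncPolytope
    {σ : Type*} [Countable σ] (q : σ → σ → ℝ)
    (hq_offdiag : ∀ x y : σ, x ≠ y → 0 ≤ q x y)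
    (hq_row : ∀ x : σ, HasSum (fun y => if y = x then 0 else q x y) (-(q x x)))
    (w : σ → ℝ) (hw_nonneg : ∀ x, 0 ≤ w x)
    (hw_norm : ∀ r : ℝ, (truncSet w r).Finite)
    (c : ℝ) (π : σ → ℝ) (hπ : π ∈ statSet q w c)
    (r : ℝ) (hr : 0 < r) :
    (truncSet w r).indicator π ∈ truncPolytope q w c r := by

  obtain ⟨hpos, hsum, hstat, hwsum, hwle⟩ := hπ
  have hπsummable : Summable π := hsum.summable
  set S := truncSet w r with hSdef
  have hind_nonneg : ∀ x, 0 ≤ S.indicator π x :=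
    fun x => Set.indicator_nonneg (fun y _ => hpos y) x
  have hind_le : ∀ x, S.indicator π x ≤ π x :=
    fun x => Set.indicator_le_self' (fun y _ => hpos y) x
  have hind_summable : Summable (S.indicator π) := hπsummable.indicator S
  have hindc_summable : Summable (Sᶜ.indicator π) := hπsummable.indicator Sᶜ
  have hsplit : (∑' x, S.indicator π x) + (∑' x, Sᶜ.indicator π x) = 1 := by
    rw [← Summable.tsum_add hind_summable hindc_summable]
    rw [← hsum.tsum_eq]
    exact tsum_congr fun x => by
      simp [Set.indicator_apply]
      by_cases h : x ∈ S <;> simp [h]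
  have hcompl_le : (∑' x, Sᶜ.indicator π x) ≤ c / r := by
    rw [le_div_iff₀' hr]
    calc r * ∑' x, Sᶜ.indicator π x = ∑' x, r * Sᶜ.indicator π x := by
          rw [← tsum_mul_left]
      _ ≤ ∑' x, w x * π x := by
          apply Summable.tsum_le_tsum _ (hindc_summable.mul_left r) hwsum
          intro x
          by_cases h : x ∈ Sᶜ
          · rw [Set.indicator_of_mem h]
            have hwx : r ≤ w x := not_lt.mp h
            exact mul_le_mul_of_nonneg_right hwx (hpos x)
          · rw [Set.indicator_of_notMem h, mul_zero]
            exact mul_nonneg (hw_nonneg x) (hpos x)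
      _ ≤ c := hwle
  refine ⟨hind_nonneg, fun x hx => Set.indicator_of_notMem (fun h : x ∈ S => hx h) π, ?_, ?_, ?_, ?_⟩
  · intro x hx
    have : (fun y => S.indicator π y * q y x) = fun y => π y * q y x := by
      funext y
      by_cases h : y ∈ S
      · rw [Set.indicator_of_mem h]
      · by_cases hq : q y x = 0
        · simp [hq]
        · exact absurd (hx.2 y hq) h
    rw [this, (hstat x).tsum_eq]
  · linarith
  · calc (∑' x, S.indicator π x) ≤ ∑' x, π x :=
          Summable.tsum_le_tsum hind_le hind_summable hπsummable
      _ = 1 := hsum.tsum_eq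
  · have heq : (fun x => w x * S.indicator π x) = S.indicator (fun x => w x * π x) := by
      funext x
      by_cases h : x ∈ S <;> simp [Set.indicator_apply, h]
    calc (∑' x, w x * S.indicator π x) ≤ ∑' x, w x * π x := by
          apply Summable.tsum_le_tsum _ _ hwsum
          · intro x
            by_cases h : x ∈ S
            · rw [Set.indicator_of_mem h]
            · rw [Set.indicator_of_notMem h, mul_zero]
              exact mul_nonneg (hw_nonneg x) (hpos x)
          · rw [heq]; exact hwsum.indicator S
      _ ≤ c := hwle
end

section
/- (Theorem on LP bounds for stationary averages, convergence part.) Let Q be a rate matrix on a countable state space S such that {z ∈ S : q(z,x) ≠ 0} is finite for every x ∈ S, let w be norm-like, suppose P_{w,c} is non-empty, and let f : S → ℝ satisfy lim_{r→∞} sup_{x∉S_r}(|f(x)|/w(x)) = 0. Then lim_{r→∞} l^r_f = l_f := inf{⟨f⟩_π : π ∈ P_{w,c}} and lim_{r→∞} u^r_f = u_f := sup{⟨f⟩_π : π ∈ P_{w,c}}, where l^r_f := inf{∑_x f(x)π^r(x) : π^r ∈ P^r_{w,c}} and u^r_f := sup{∑_x f(x)π^r(x) : π^r ∈ P^r_{w,c}}.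 -/
open scoped Classical

open Filter

section helpers

variable {σ : Type*}

lemma summable_of_trunc_support {w : σ → ℝ} (hw : ∀ r : ℝ, (truncSet w r).Finite)
    {h : σ → ℝ} {r : ℝ} (h0 : ∀ x, ¬ w x < r → h x = 0) : Summable h :=
  summable_of_ne_finset_zero (s := (hw r).toFinset) fun x hx =>
    h0 x (by simpa [truncSet, Set.Finite.mem_toFinset] using hx)

lemma exists_abs_bound {w f : σ → ℝ} (hw0 : ∀ x, 0 ≤ w x)
    (hw : ∀ r : ℝ, (truncSet w r).Finite)
    (hf : ∀ ε : ℝ, 0 < ε → ∃ r₀ : ℝ, ∀ x, ¬ w x < r₀ → |f x| ≤ ε * w x) :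
    ∃ M : ℝ, 0 ≤ M ∧ ∀ x, |f x| ≤ M + w x := by
  obtain ⟨r₁, h1⟩ := hf 1 one_pos
  have hM0 : (0:ℝ) ≤ ∑ x ∈ (hw r₁).toFinset, |f x| :=
    Finset.sum_nonneg fun _ _ => abs_nonneg _
  refine ⟨∑ x ∈ (hw r₁).toFinset, |f x|, hM0, fun x => ?_⟩
  by_cases hx : w x < r₁
  · have hmem : x ∈ (hw r₁).toFinset := (hw r₁).mem_toFinset.2 hx
    have := Finset.single_le_sum (f := fun y => |f y|) (fun _ _ => abs_nonneg _) hmem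
    linarith [hw0 x]
  · have := h1 x hx
    rw [one_mul] at this
    linarith

lemma tail_bound {w f g : σ → ℝ} {ε r₀ c : ℝ}
    (hw0 : ∀ x, 0 ≤ w x)
    (hw : ∀ r : ℝ, (truncSet w r).Finite) (hg0 : ∀ x, 0 ≤ g x)
    (hfg : Summable (fun x => f x * g x)) (hwg : Summable (fun x => w x * g x))
    (hwgc : (∑' x, w x * g x) ≤ c)
    (hε : 0 ≤ ε) (hf' : ∀ x, ¬ w x < r₀ → |f x| ≤ ε * w x) :
    |(∑' x, f x * g x) - ∑ x ∈ (hw r₀).toFinset, f x * g x| ≤ ε * c := by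
  classical
  set s := (hw r₀).toFinset with hs
  have key := Summable.sum_add_tsum_compl (s := s) hfg
  have hdiff : (∑' x, f x * g x) - ∑ x ∈ s, f x * g x
      = ∑' x : ((s : Set σ)ᶜ : Set σ), f x * g x := by linarith
  rw [hdiff]
  have habs : |∑' x : ((s : Set σ)ᶜ : Set σ), f x * g x|
      ≤ ∑' x : ((s : Set σ)ᶜ : Set σ), |f x| * |g x| := by
    have := norm_tsum_le_tsum_norm (f := fun x : ((s : Set σ)ᶜ : Set σ) => f x * g x)
      (by
        have h := hfg.abs.subtype ((s : Set σ)ᶜ)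
        refine h.congr fun i => ?_
        simp [Function.comp, abs_mul])
    simpa [Real.norm_eq_abs] using this
  refine habs.trans ?_
  have hle : ∀ x : ((s : Set σ)ᶜ : Set σ), |f (x:σ)| * |g (x:σ)| ≤ ε * (w (x:σ) * g (x:σ)) := by
    rintro ⟨x, hx⟩
    have hxs : ¬ w x < r₀ := by
      intro hwx
      exact hx ((hw r₀).mem_toFinset.2 hwx)
    have := hf' x hxs
    rw [abs_of_nonneg (hg0 x), ← mul_assoc]
    exact mul_le_mul_of_nonneg_right this (hg0 x)
  have h1 : (∑' x : ((s : Set σ)ᶜ : Set σ), |f (x:σ)| * |g (x:σ)|)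
      ≤ ∑' x : ((s : Set σ)ᶜ : Set σ), ε * (w (x:σ) * g (x:σ)) :=
    Summable.tsum_le_tsum hle (by
      have := hfg.abs.subtype ((s : Set σ)ᶜ)
      refine this.congr fun i => ?_
      simp [Function.comp, abs_mul]) ((hwg.mul_left ε).subtype _)
  refine h1.trans ?_
  rw [tsum_mul_left]
  have h2 : (∑' x : ((s : Set σ)ᶜ : Set σ), w (x:σ) * g (x:σ)) ≤ c := by
    have key2 := Summable.sum_add_tsum_compl (s := s) hwg
    have hnn : (0:ℝ) ≤ ∑ x ∈ s, w x * g x :=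
      Finset.sum_nonneg fun x _ => mul_nonneg (hw0 x) (hg0 x)
    linarith
  exact mul_le_mul_of_nonneg_left h2 hε

lemma trunc_mem {q : σ → σ → ℝ} {w : σ → ℝ} {c : ℝ} (hw0 : ∀ x, 0 ≤ w x)
    {π : σ → ℝ} (hπ : π ∈ statSet q w c) {r : ℝ} (hr : 0 < r) :
    (fun x => if w x < r then π x else 0) ∈ truncPolytope q w c r := by
  obtain ⟨h0, h1, hst, hws, hwc⟩ := hπ
  set πr : σ → ℝ := fun x => if w x < r then π x else 0 with hπr
  have hπr0 : ∀ x, 0 ≤ πr x := by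
    intro x; by_cases h : w x < r <;> simp [πr, h, h0 x]
  have hπrle : ∀ x, πr x ≤ π x := by
    intro x; by_cases h : w x < r <;> simp [πr, h, h0 x]
  have hπsum : Summable π := h1.summable
  have hπrsum : Summable πr := hπsum.of_nonneg_of_le hπr0 hπrle
  have htsum_le : (∑' x, πr x) ≤ 1 := by
    calc (∑' x, πr x) ≤ ∑' x, π x := Summable.tsum_le_tsum hπrle hπrsum hπsum
    _ = 1 := h1.tsum_eq
  refine ⟨hπr0, fun x hx => if_neg hx, ?_, ?_, htsum_le, ?_⟩
  · intro x hx
    have heq : ∀ y, πr y * q y x = π y * q y x := by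
      intro y
      by_cases hq : q y x = 0
      · simp [hq]
      · simp [πr, if_pos (hx.2 y hq)]
    calc (∑' y, πr y * q y x) = ∑' y, π y * q y x := tsum_congr heq
    _ = 0 := (hst x).tsum_eq
  · -- mass lower bound
    have hsub : Summable (fun x => π x - πr x) := hπsum.sub hπrsum
    have hdiff : (∑' x, (π x - πr x)) = 1 - ∑' x, πr x := by
      rw [Summable.tsum_sub hπsum hπrsum, h1.tsum_eq]
    have hble : ∀ x, π x - πr x ≤ r⁻¹ * (w x * π x) := by
      intro x
      by_cases h : w x < r
      · simp only [πr, if_pos h, sub_self]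
        have := mul_nonneg (hw0 x) (h0 x)
        positivity
      · simp only [πr, if_neg h, sub_zero]
        push_neg at h
        have h2 : r * π x ≤ w x * π x := mul_le_mul_of_nonneg_right h (h0 x)
        have h3 := mul_le_mul_of_nonneg_left h2 (le_of_lt (inv_pos.2 hr))
        rwa [← mul_assoc, inv_mul_cancel₀ (ne_of_gt hr), one_mul] at h3
    have hb : (∑' x, (π x - πr x)) ≤ r⁻¹ * ∑' x, w x * π x := by
      calc (∑' x, (π x - πr x)) ≤ ∑' x, r⁻¹ * (w x * π x) :=
        Summable.tsum_le_tsum hble hsub (hws.mul_left _)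
      _ = r⁻¹ * ∑' x, w x * π x := tsum_mul_left
    have : r⁻¹ * (∑' x, w x * π x) ≤ r⁻¹ * c :=
      mul_le_mul_of_nonneg_left hwc (by positivity)
    rw [hdiff] at hb
    have hcr : r⁻¹ * c = c / r := by ring
    linarith
  · -- moment bound
    have hle : ∀ x, w x * πr x ≤ w x * π x := fun x =>
      mul_le_mul_of_nonneg_left (hπrle x) (hw0 x)
    have h1' : Summable (fun x => w x * πr x) :=
      hws.of_nonneg_of_le (fun x => mul_nonneg (hw0 x) (hπr0 x)) hle
    calc (∑' x, w x * πr x) ≤ ∑' x, w x * π x := Summable.tsum_le_tsum hle h1' hws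
    _ ≤ c := hwc

lemma limit_lemma [Countable σ] {q : σ → σ → ℝ}
    (hq_fin : ∀ x : σ, {z : σ | q z x ≠ 0}.Finite)
    {w : σ → ℝ} (hw0 : ∀ x, 0 ≤ w x) (hw : ∀ r : ℝ, (truncSet w r).Finite)
    {c : ℝ} (hc : 0 ≤ c)
    {f : σ → ℝ}
    (hf : ∀ ε : ℝ, 0 < ε → ∃ r₀ : ℝ, ∀ x, ¬ w x < r₀ → |f x| ≤ ε * w x)
    (r : ℕ → ℝ) (hr : Tendsto r atTop atTop)
    (ρ : ℕ → σ → ℝ) (hρ : ∀ k, ρ k ∈ truncPolytope q w c (r k)) :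
    ∃ π ∈ statSet q w c, ∃ ψ : ℕ → ℕ, StrictMono ψ ∧
      Tendsto (fun k => ∑' x, f x * ρ (ψ k) x) atTop (nhds (∑' x, f x * π x)) := by
  classical
  -- each ρ k x lies in [0,1]
  have hsum : ∀ k, Summable (ρ k) := fun k =>
    summable_of_trunc_support hw (hρ k).2.1
  have hmem01 : ∀ k x, ρ k x ∈ Set.Icc (0:ℝ) 1 := by
    intro k x
    refine ⟨(hρ k).1 x, ?_⟩
    have h1 : ρ k x ≤ ∑' y, ρ k y := Summable.le_tsum (hsum k) x fun y _ => (hρ k).1 y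
    exact h1.trans (hρ k).2.2.2.2.1
  -- compactness extraction
  set g : ℕ → ∀ _ : σ, (Set.Icc (0:ℝ) 1) := fun k x => ⟨ρ k x, hmem01 k x⟩ with hg
  obtain ⟨a, ψ, hψ, hconv⟩ := SeqCompactSpace.tendsto_subseq g
  set π : σ → ℝ := fun x => (a x : ℝ) with hπdef
  have hlim : ∀ x, Tendsto (fun k => ρ (ψ k) x) atTop (nhds (π x)) := by
    intro x
    have hcont : Continuous fun p : (∀ _ : σ, (Set.Icc (0:ℝ) 1)) => (p x : ℝ) :=
      continuous_subtype_val.comp (continuous_apply x)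
    exact (hcont.tendsto a).comp hconv
  -- renotate the subsequence
  set ρ' : ℕ → σ → ℝ := fun k => ρ (ψ k) with hρ'def
  set r' : ℕ → ℝ := fun k => r (ψ k) with hr'def
  have hρ' : ∀ k, ρ' k ∈ truncPolytope q w c (r' k) := fun k => hρ (ψ k)
  have hr' : Tendsto r' atTop atTop := hr.comp hψ.tendsto_atTop
  have hsum' : ∀ k, Summable (ρ' k) := fun k => hsum (ψ k)
  have hmul : ∀ (k : ℕ) (u : σ → ℝ), Summable (fun x => u x * ρ' k x) := fun k u =>
    summable_of_trunc_support hw (fun x hx => by rw [(hρ' k).2.1 x hx, mul_zero])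
  -- π is [0,1]-valued
  have hπ0 : ∀ x, 0 ≤ π x := fun x => (a x).2.1
  -- partial sums of π are at most 1
  have hps : ∀ s : Finset σ, (∑ x ∈ s, π x) ≤ 1 := by
    intro s
    have ht : Tendsto (fun k => ∑ x ∈ s, ρ' k x) atTop (nhds (∑ x ∈ s, π x)) :=
      tendsto_finset_sum s fun x _ => hlim x
    refine le_of_tendsto ht (Eventually.of_forall fun k => ?_)
    exact (Summable.sum_le_tsum s (fun y _ => (hρ' k).1 y) (hsum' k)).trans (hρ' k).2.2.2.2.1
  have hπsum : Summable π := summable_of_sum_le (fun x => hπ0 x) hps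
  have htsum_le1 : (∑' x, π x) ≤ 1 := Summable.tsum_le_of_sum_le hπsum hps
  -- moment partial sums
  have hpsw : ∀ s : Finset σ, (∑ x ∈ s, w x * π x) ≤ c := by
    intro s
    have ht : Tendsto (fun k => ∑ x ∈ s, w x * ρ' k x) atTop (nhds (∑ x ∈ s, w x * π x)) :=
      tendsto_finset_sum s fun x _ => (hlim x).const_mul (w x)
    refine le_of_tendsto ht (Eventually.of_forall fun k => ?_)
    exact (Summable.sum_le_tsum s (fun y _ => mul_nonneg (hw0 y) ((hρ' k).1 y)) (hmul k w)).trans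
      (hρ' k).2.2.2.2.2
  have hπw : Summable (fun x => w x * π x) :=
    summable_of_sum_le (fun x => mul_nonneg (hw0 x) (hπ0 x)) hpsw
  have hπwc : (∑' x, w x * π x) ≤ c := Summable.tsum_le_of_sum_le hπw hpsw
  -- mass lower bound
  have hmass : ∀ (k : ℕ) (R : ℝ), 0 < R →
      (∑' x, ρ' k x) - ∑ x ∈ (hw R).toFinset, ρ' k x ≤ R⁻¹ * c := by
    intro k R hR
    have h1 : ∀ x, ¬ w x < R → |(1:ℝ)| ≤ R⁻¹ * w x := by
      intro x hx
      push_neg at hx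
      rw [abs_one]
      calc (1:ℝ) = R⁻¹ * R := by rw [inv_mul_cancel₀ (ne_of_gt hR)]
      _ ≤ R⁻¹ * w x := mul_le_mul_of_nonneg_left hx (le_of_lt (inv_pos.2 hR))
    have := tail_bound (f := fun _ => (1:ℝ)) (r₀ := R) (ε := R⁻¹) hw0 hw (hρ' k).1
      (hmul k (fun _ => 1)) (hmul k w) (hρ' k).2.2.2.2.2 (le_of_lt (inv_pos.2 hR)) h1
    simp only [one_mul] at this
    have h2 := abs_le.1 this
    linarith [h2.2]
  -- tsum π = 1
  have htsum_ge : ∀ R : ℝ, 0 < R → 1 - c / R - R⁻¹ * c ≤ ∑' x, π x := by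
    intro R hR
    set s := (hw R).toFinset
    have ht : Tendsto (fun k => ∑ x ∈ s, ρ' k x) atTop (nhds (∑ x ∈ s, π x)) :=
      tendsto_finset_sum s fun x _ => hlim x
    have hlow : Tendsto (fun k => 1 - c / r' k - R⁻¹ * c) atTop (nhds (1 - 0 - R⁻¹ * c)) :=
      ((tendsto_const_nhds.sub (hr'.const_div_atTop c)).sub tendsto_const_nhds)
    have hle : ∀ k, 1 - c / r' k - R⁻¹ * c ≤ ∑ x ∈ s, ρ' k x := by
      intro k
      have h1 := hmass k R hR
      have h2 := (hρ' k).2.2.2.1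
      linarith
    have hfin : (1:ℝ) - 0 - R⁻¹ * c ≤ ∑ x ∈ s, π x :=
      le_of_tendsto_of_tendsto' hlow ht hle
    have : (∑ x ∈ s, π x) ≤ ∑' x, π x := Summable.sum_le_tsum s (fun y _ => hπ0 y) hπsum
    have hcr : c / R = R⁻¹ * c := by ring
    linarith
  have htsum1 : (∑' x, π x) = 1 := by
    refine le_antisymm htsum_le1 ?_
    have h1 := tendsto_const_div_atTop_nhds_zero_nat c
    have h2 : Tendsto (fun n : ℕ => (n:ℝ)⁻¹ * c) atTop (nhds 0) := by
      simpa [div_eq_inv_mul] using h1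
    have hlim1 : Tendsto (fun n : ℕ => 1 - c / n - (n:ℝ)⁻¹ * c) atTop (nhds 1) := by
      have h3 := (tendsto_const_nhds (x := (1:ℝ)) (f := atTop (α := ℕ))).sub h1 |>.sub h2
      simpa using h3
    refine le_of_tendsto hlim1 ((eventually_gt_atTop 0).mono fun n hn => ?_)
    exact htsum_ge n (by exact_mod_cast hn)
  have hπ1 : HasSum π 1 := htsum1 ▸ hπsum.hasSum
  -- stationarity
  have hstat : ∀ x, HasSum (fun y => π y * q y x) 0 := by
    intro x
    set Z := (hq_fin x).toFinset with hZ
    have hqz : ∀ y, y ∉ Z → q y x = 0 := by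
      intro y hy
      by_contra h
      exact hy ((hq_fin x).mem_toFinset.2 h)
    have hzero : ∀ y ∉ Z, π y * q y x = 0 := fun y hy => by rw [hqz y hy, mul_zero]
    have hS : HasSum (fun y => π y * q y x) (∑ y ∈ Z, π y * q y x) :=
      hasSum_sum_of_ne_finset_zero hzero
    suffices hfin : (∑ y ∈ Z, π y * q y x) = 0 by rwa [hfin] at hS
    have htend : Tendsto (fun k => ∑ y ∈ Z, ρ' k y * q y x) atTop
        (nhds (∑ y ∈ Z, π y * q y x)) :=
      tendsto_finset_sum Z fun y _ => (hlim y).mul_const (q y x)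
    have hne : (insert x Z).Nonempty := Finset.insert_nonempty x Z
    set B := (insert x Z).sup' hne w with hB
    have hev : ∀ᶠ k in atTop, (fun k => ∑ y ∈ Z, ρ' k y * q y x) k = (fun _ => (0:ℝ)) k := by
      filter_upwards [hr'.eventually (eventually_gt_atTop B)] with k hk
      have hxE : x ∈ eqStates q w (r' k) := by
        constructor
        · exact lt_of_le_of_lt (Finset.le_sup' w (Finset.mem_insert_self x Z)) hk
        · intro z hz
          exact lt_of_le_of_lt
            (Finset.le_sup' w (Finset.mem_insert_of_mem ((hq_fin x).mem_toFinset.2 hz))) hk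
      have h0 := (hρ' k).2.2.1 x hxE
      have hzero' : ∀ y ∉ Z, ρ' k y * q y x = 0 := fun y hy => by rw [hqz y hy, mul_zero]
      rw [← tsum_eq_sum (L := SummationFilter.unconditional σ) hzero']
      exact h0
    have := (tendsto_congr' hev).1 htend
    exact tendsto_nhds_unique this tendsto_const_nhds
  -- summability of f against π
  obtain ⟨M, hM0, hM⟩ := exists_abs_bound hw0 hw hf
  have hfπ_abs : Summable (fun x => |f x * π x|) := by
    refine Summable.of_nonneg_of_le (fun x => abs_nonneg _) (fun x => ?_)
      ((hπsum.mul_left M).add hπw)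
    rw [abs_mul, abs_of_nonneg (hπ0 x)]
    have := mul_le_mul_of_nonneg_right (hM x) (hπ0 x)
    nlinarith [hπ0 x, hw0 x]
  have hfπ : Summable (fun x => f x * π x) := summable_abs_iff.1 hfπ_abs
  -- convergence of the averages
  have htendF : Tendsto (fun k => ∑' x, f x * ρ' k x) atTop (nhds (∑' x, f x * π x)) := by
    rw [Metric.tendsto_atTop]
    intro ε hε
    have hc1 : (0:ℝ) < c + 1 := by linarith
    set ε' := ε / (3 * (c + 1)) with hε'def
    have hε' : 0 < ε' := by positivity
    obtain ⟨r₀, hr₀⟩ := hf ε' hε'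
    set s := (hw r₀).toFinset with hsdef
    have htail : ∀ k, |(∑' x, f x * ρ' k x) - ∑ x ∈ s, f x * ρ' k x| ≤ ε' * c := fun k =>
      tail_bound hw0 hw (hρ' k).1 (hmul k f) (hmul k w) (hρ' k).2.2.2.2.2 hε'.le hr₀
    have htailπ : |(∑' x, f x * π x) - ∑ x ∈ s, f x * π x| ≤ ε' * c :=
      tail_bound hw0 hw hπ0 hfπ hπw hπwc hε'.le hr₀
    have htendS : Tendsto (fun k => ∑ x ∈ s, f x * ρ' k x) atTop
        (nhds (∑ x ∈ s, f x * π x)) :=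
      tendsto_finset_sum s fun x _ => (hlim x).const_mul (f x)
    obtain ⟨N, hN⟩ := (Metric.tendsto_atTop.1 htendS) (ε / 3) (by positivity)
    refine ⟨N, fun k hk => ?_⟩
    have h3 := hN k hk
    rw [Real.dist_eq] at h3 ⊢
    have hεc : ε' * c ≤ ε / 3 := by
      have h4 : ε' * c ≤ ε' * (c + 1) := by nlinarith
      have h5 : ε' * (c + 1) = ε / 3 := by
        rw [hε'def]; field_simp
      linarith
    have t1 := htail k
    have ha := abs_sub_le (∑' x, f x * ρ' k x) (∑ x ∈ s, f x * ρ' k x) (∑' x, f x * π x)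
    have hb := abs_sub_le (∑ x ∈ s, f x * ρ' k x) (∑ x ∈ s, f x * π x) (∑' x, f x * π x)
    have hc' : |(∑ x ∈ s, f x * π x) - ∑' x, f x * π x| ≤ ε' * c := by
      rw [abs_sub_comm]; exact htailπ
    calc |(∑' x, f x * ρ' k x) - ∑' x, f x * π x| ≤ _ := ha
    _ < ε := by linarith
  exact ⟨π, ⟨hπ0, hπ1, hstat, hπw, hπwc⟩, ψ, hψ, htendF⟩

lemma inf_converge [Countable σ] {q : σ → σ → ℝ}
    (hq_fin : ∀ x : σ, {z : σ | q z x ≠ 0}.Finite)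
    {w : σ → ℝ} (hw0 : ∀ x, 0 ≤ w x) (hw : ∀ r : ℝ, (truncSet w r).Finite)
    {c : ℝ} (hP : (statSet q w c).Nonempty)
    {f : σ → ℝ}
    (hf : ∀ ε : ℝ, 0 < ε → ∃ r₀ : ℝ, ∀ x, ¬ w x < r₀ → |f x| ≤ ε * w x) :
    Tendsto (fun n : ℕ =>
        sInf ((fun ρ => ∑' x, f x * ρ x) '' truncPolytope q w c (n : ℝ)))
      atTop (nhds (sInf ((fun π => ∑' x, f x * π x) '' statSet q w c))) := by
  classical
  obtain ⟨π₀, hπ₀⟩ := hP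
  have hc : (0:ℝ) ≤ c :=
    le_trans (tsum_nonneg fun x => mul_nonneg (hw0 x) (hπ₀.1 x)) hπ₀.2.2.2.2
  obtain ⟨M, hM0, hM⟩ := exists_abs_bound hw0 hw hf
  -- bounds for stationary solutions
  have hstat_bd : ∀ π ∈ statSet q w c,
      Summable (fun x => f x * π x) ∧ |∑' x, f x * π x| ≤ M + c := by
    intro π hπ
    obtain ⟨h0, h1, _, hws, hwc⟩ := hπ
    have hπsum : Summable π := h1.summable
    have habs : Summable (fun x => |f x * π x|) := by
      refine Summable.of_nonneg_of_le (fun x => abs_nonneg _) (fun x => ?_)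
        ((hπsum.mul_left M).add hws)
      rw [abs_mul, abs_of_nonneg (h0 x)]
      nlinarith [hM x, h0 x, hw0 x, mul_le_mul_of_nonneg_right (hM x) (h0 x)]
    have hsum : Summable (fun x => f x * π x) := summable_abs_iff.1 habs
    refine ⟨hsum, ?_⟩
    have h2 : |∑' x, f x * π x| ≤ ∑' x, |f x * π x| := by
      simpa only [Real.norm_eq_abs] using norm_tsum_le_tsum_norm (by
        simpa only [Real.norm_eq_abs] using habs : Summable fun x => ‖f x * π x‖)
    refine h2.trans ?_
    have h3 : ∀ x, |f x * π x| ≤ M * π x + w x * π x := by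
      intro x
      rw [abs_mul, abs_of_nonneg (h0 x)]
      nlinarith [mul_le_mul_of_nonneg_right (hM x) (h0 x)]
    have h4 := Summable.tsum_le_tsum h3 habs ((hπsum.mul_left M).add hws)
    rw [Summable.tsum_add (hπsum.mul_left M) hws, tsum_mul_left, h1.tsum_eq] at h4
    linarith
  -- bounds for truncated solutions
  have htrunc_bd : ∀ (r : ℝ), ∀ ρ ∈ truncPolytope q w c r,
      Summable (fun x => f x * ρ x) ∧ |∑' x, f x * ρ x| ≤ M + c := by
    intro r ρ hρ
    obtain ⟨h0, hsupp, _, _, hle1, hwc⟩ := hρ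
    have hρsum : Summable ρ := summable_of_trunc_support hw hsupp
    have hmul : ∀ u : σ → ℝ, Summable (fun x => u x * ρ x) := fun u =>
      summable_of_trunc_support hw (fun x hx => by rw [hsupp x hx, mul_zero])
    have habs : Summable (fun x => |f x * ρ x|) := by
      refine Summable.of_nonneg_of_le (fun x => abs_nonneg _) (fun x => ?_)
        ((hρsum.mul_left M).add (hmul w))
      rw [abs_mul, abs_of_nonneg (h0 x)]
      nlinarith [mul_le_mul_of_nonneg_right (hM x) (h0 x)]
    refine ⟨hmul f, ?_⟩
    have h2 : |∑' x, f x * ρ x| ≤ ∑' x, |f x * ρ x| := by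
      simpa only [Real.norm_eq_abs] using norm_tsum_le_tsum_norm (by
        simpa only [Real.norm_eq_abs] using habs : Summable fun x => ‖f x * ρ x‖)
    refine h2.trans ?_
    have h3 : ∀ x, |f x * ρ x| ≤ M * ρ x + w x * ρ x := by
      intro x
      rw [abs_mul, abs_of_nonneg (h0 x)]
      nlinarith [mul_le_mul_of_nonneg_right (hM x) (h0 x)]
    have h4 := Summable.tsum_le_tsum h3 habs ((hρsum.mul_left M).add (hmul w))
    rw [Summable.tsum_add (hρsum.mul_left M) (hmul w), tsum_mul_left] at h4
    have h5 : M * ∑' x, ρ x ≤ M * 1 := mul_le_mul_of_nonneg_left hle1 hM0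
    linarith
  set F : (σ → ℝ) → ℝ := fun ρ => ∑' x, f x * ρ x with hF
  set A : Set ℝ := F '' statSet q w c with hA
  have hAne : A.Nonempty := ⟨F π₀, Set.mem_image_of_mem F hπ₀⟩
  have hAbd : BddBelow A := by
    refine ⟨-(M + c), ?_⟩
    rintro b ⟨g, hg, rfl⟩
    have := (hstat_bd g hg).2
    have := abs_le.1 this
    linarith [this.1]
  have hbdd_r : ∀ r : ℝ, BddBelow (F '' truncPolytope q w c r) := by
    intro r
    refine ⟨-(M + c), ?_⟩
    rintro b ⟨g, hg, rfl⟩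
    have := abs_le.1 (htrunc_bd r g hg).2
    linarith [this.1]
  set l := sInf A with hl
  rw [Metric.tendsto_atTop]
  intro ε hε
  have hc1 : (0:ℝ) < c + 1 := by linarith
  set ε' := ε / (2 * (c + 1)) with hε'def
  have hε' : 0 < ε' := by positivity
  have hε'c : ε' * c ≤ ε / 2 := by
    have h4 : ε' * c ≤ ε' * (c + 1) := by nlinarith
    have h5 : ε' * (c + 1) = ε / 2 := by rw [hε'def]; field_simp
    linarith
  obtain ⟨r₀, hr₀⟩ := hf ε' hε'
  -- upper bound, valid for n ≥ N₁
  set N₁ : ℕ := max 1 ⌈r₀⌉₊ with hN₁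
  have hupper : ∀ n : ℕ, N₁ ≤ n →
      sInf (F '' truncPolytope q w c (n : ℝ)) ≤ l + ε / 2 := by
    intro n hn
    have hn1 : (0:ℝ) < (n:ℝ) := by
      have : 1 ≤ n := le_trans (le_max_left _ _) hn
      exact_mod_cast this
    have hr₀n : r₀ ≤ (n : ℝ) := by
      have : ⌈r₀⌉₊ ≤ n := le_trans (le_max_right _ _) hn
      calc r₀ ≤ (⌈r₀⌉₊ : ℝ) := Nat.le_ceil r₀
      _ ≤ (n : ℝ) := by exact_mod_cast this
    have key : ∀ b ∈ A, sInf (F '' truncPolytope q w c (n : ℝ)) - ε' * c ≤ b := by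
      rintro b ⟨π, hπ, rfl⟩
      set πr : σ → ℝ := fun x => if w x < (n:ℝ) then π x else 0 with hπr
      have hmem := trunc_mem hw0 hπ hn1
      have hle : sInf (F '' truncPolytope q w c (n : ℝ)) ≤ F πr :=
        csInf_le (hbdd_r _) (Set.mem_image_of_mem F hmem)
      -- F πr equals the partial sum of f·π over S_n
      have hsum_eq : F πr = ∑ x ∈ (hw (n:ℝ)).toFinset, f x * π x := by
        rw [hF]
        simp only
        rw [tsum_eq_sum (s := (hw (n:ℝ)).toFinset) (fun x hx => by
          rw [hπr]
          simp only
          rw [if_neg (by simpa [truncSet, Set.Finite.mem_toFinset] using hx), mul_zero])]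
        refine Finset.sum_congr rfl fun x hx => ?_
        rw [hπr]
        simp only
        rw [if_pos (by simpa [truncSet, Set.Finite.mem_toFinset] using hx)]
      have hftail : ∀ x, ¬ w x < (n:ℝ) → |f x| ≤ ε' * w x := by
        intro x hx
        refine hr₀ x fun hlt => hx (lt_of_lt_of_le hlt hr₀n)
      have htb := tail_bound (r₀ := (n:ℝ)) hw0 hw hπ.1 (hstat_bd π hπ).1
        hπ.2.2.2.1 hπ.2.2.2.2 hε'.le hftail
      have := abs_le.1 htb
      have hFπr : F πr ≤ F π + ε' * c := by
        rw [hsum_eq]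
        have := this.1
        simp only [hF]
        linarith
      linarith
    have hge := le_csInf hAne key
    linarith
  -- lower bound, valid for n ≥ some N₂
  have hlower : ∃ N₂ : ℕ, ∀ n : ℕ, N₂ ≤ n →
      l - ε / 2 ≤ sInf (F '' truncPolytope q w c (n : ℝ)) := by
    by_contra hcon
    push_neg at hcon
    have hfreq : ∃ᶠ n : ℕ in atTop,
        (sInf (F '' truncPolytope q w c (n : ℝ)) < l - ε / 2 ∧ 1 ≤ n) := by
      refine (frequently_atTop.2 fun N => ?_).and_eventually (eventually_ge_atTop 1)
      obtain ⟨n, hn1, hn2⟩ := hcon N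
      exact ⟨n, hn1, hn2⟩
    obtain ⟨φ, hφmono, hφ⟩ := extraction_of_frequently_atTop hfreq
    have hsel : ∀ k, ∃ g ∈ truncPolytope q w c ((φ k : ℕ) : ℝ),
        F g < l - ε / 2 := by
      intro k
      have hpos : (0:ℝ) < ((φ k : ℕ) : ℝ) := by exact_mod_cast (hφ k).2
      have hne : (F '' truncPolytope q w c ((φ k : ℕ) : ℝ)).Nonempty :=
        ⟨F (fun x => if w x < ((φ k : ℕ) : ℝ) then π₀ x else 0),
          Set.mem_image_of_mem F (trunc_mem hw0 hπ₀ hpos)⟩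
      obtain ⟨b, ⟨g, hg, rfl⟩, hb⟩ := exists_lt_of_csInf_lt hne (hφ k).1
      exact ⟨g, hg, hb⟩
    choose ρs hρs hρlt using hsel
    have hrr : Tendsto (fun k => ((φ k : ℕ) : ℝ)) atTop atTop :=
      tendsto_natCast_atTop_atTop.comp hφmono.tendsto_atTop
    obtain ⟨π, hπ, ψ, hψ, htend⟩ :=
      limit_lemma hq_fin hw0 hw hc hf _ hrr ρs hρs
    have hFle : (∑' x, f x * π x) ≤ l - ε / 2 :=
      le_of_tendsto htend (Eventually.of_forall fun k => (hρlt (ψ k)).le)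
    have hlle : l ≤ ∑' x, f x * π x := csInf_le hAbd ⟨π, hπ, rfl⟩
    linarith
  obtain ⟨N₂, hN₂⟩ := hlower
  refine ⟨max N₁ N₂, fun n hn => ?_⟩
  have h1 := hupper n (le_trans (le_max_left _ _) hn)
  have h2 := hN₂ n (le_trans (le_max_right _ _) hn)
  rw [Real.dist_eq, abs_lt]
  constructor <;> linarith

end helpers

/-- LP bounds on stationary averages, convergence part.
For a rate matrix `q` with `{z : q z x ≠ 0}` finite for every `x`, norm-like `w`,
non-empty `P_{w,c}` and `f : S → ℝ` with `sup_{x ∉ S_r} |f(x)|/w(x) → 0` as `r → ∞`,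
the LP bounds `l^r_f` and `u^r_f` converge respectively to
`l_f = inf {⟨f⟩_π : π ∈ P_{w,c}}` and `u_f = sup {⟨f⟩_π : π ∈ P_{w,c}}`. -/
theorem lp_average_bounds_converge
    {σ : Type*} [Countable σ] (q : σ → σ → ℝ)
    (hq_offdiag : ∀ x y : σ, x ≠ y → 0 ≤ q x y)
    (hq_row : ∀ x : σ, HasSum (fun y => if y = x then 0 else q x y) (-(q x x)))
    (hq_fin : ∀ x : σ, {z : σ | q z x ≠ 0}.Finite)
    (w : σ → ℝ) (hw_nonneg : ∀ x, 0 ≤ w x)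
    (hw_norm : ∀ r : ℝ, (truncSet w r).Finite)
    (c : ℝ) (hP : (statSet q w c).Nonempty)
    (f : σ → ℝ)
    (hf : ∀ ε : ℝ, 0 < ε → ∃ r₀ : ℝ, ∀ x, ¬ w x < r₀ → |f x| ≤ ε * w x) :
    Tendsto (fun r : ℕ =>
        sInf ((fun ρ => ∑' x, f x * ρ x) '' truncPolytope q w c (r : ℝ)))
      atTop (nhds (sInf ((fun π => ∑' x, f x * π x) '' statSet q w c))) ∧
    Tendsto (fun r : ℕ =>
        sSup ((fun ρ => ∑' x, f x * ρ x) '' truncPolytope q w c (r : ℝ)))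
      atTop (nhds (sSup ((fun π => ∑' x, f x * π x) '' statSet q w c))) := by
  constructor
  · exact inf_converge hq_fin hw_nonneg hw_norm hP hf
  · have hfneg : ∀ ε : ℝ, 0 < ε → ∃ r₀ : ℝ, ∀ x, ¬ w x < r₀ →
        |(fun y => -f y) x| ≤ ε * w x := by
      intro ε hε
      obtain ⟨r₀, h⟩ := hf ε hε
      exact ⟨r₀, fun x hx => by simpa using h x hx⟩
    have h := inf_converge (f := fun y => -f y) hq_fin hw_nonneg hw_norm hP hfneg
    have key : ∀ T : Set (σ → ℝ),
        sSup ((fun ρ => ∑' x, f x * ρ x) '' T)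
          = - sInf ((fun ρ => ∑' x, (fun y => -f y) x * ρ x) '' T) := by
      intro T
      have himg : (fun ρ => ∑' x, (fun y => -f y) x * ρ x) '' T
          = (fun t : ℝ => -t) '' ((fun ρ => ∑' x, f x * ρ x) '' T) := by
        rw [← Set.image_comp]
        refine Set.image_congr fun ρ _ => ?_
        simp only [Function.comp]
        rw [← tsum_neg]
        exact tsum_congr fun x => by ring
      rw [himg]
      generalize (fun ρ => ∑' x, f x * ρ x) '' T = S
      have hnegS : -((fun t : ℝ => -t) '' S) = S := by
        ext x
        simp [Set.mem_neg]
      rw [Real.sInf_def, hnegS, neg_neg]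
    have heq : (fun r : ℕ => sSup ((fun ρ => ∑' x, f x * ρ x) '' truncPolytope q w c (r : ℝ)))
        = fun r : ℕ =>
          - sInf ((fun ρ => ∑' x, (fun y => -f y) x * ρ x) '' truncPolytope q w c (r : ℝ)) :=
      funext fun r => key _
    rw [heq, key]
    exact h.neg
end

section
/- (Corollary on distribution bounds, part (i).) Let Q be a rate matrix on a countable state space S such that {z ∈ S : q(z,x) ≠ 0} is finite for every x ∈ S, let w be norm-like, and suppose P_{w,c} is non-empty. Define l^r(x) := inf{π^r(x) : π^r ∈ P^r_{w,c}} and u^r(x) := sup{π^r(x) : π^r ∈ P^r_{w,c}} for x ∈ S_r, and l^r(x) := u^r(x) := 0 for x ∉ S_r. Then for any π ∈ P_{w,c} and r ≥ 1: l^r(x) ≤ π(x) for all x ∈ S, π(x) ≤ u^r(x) for all x ∈ S_r, and the approximation errors satisfy ‖l^r − π‖ = 1 − ∑_{x∈S_r} l^r(x) and ‖u^r − π‖ = max{∑_{x∈S_r} u^r(x) − 1 + m_r, m_r} ≤ max{∑_{x∈S_r} u^r(x) − 1 + c/r, c/r}, where m_r := ∑_{x∉S_r} π(x). -/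
open scoped Classical

open Filter

/-- **Statement 12** (corollary on distribution bounds, part (i)).
With `l^r(x) = inf {π^r(x) : π^r ∈ P^r_{w,c}}` and `u^r(x) = sup {π^r(x) : π^r ∈
P^r_{w,c}}` on `S_r` (and `0` outside), for any `π ∈ P_{w,c}` and `r ≥ 1`:
`l^r ≤ π` everywhere, `π ≤ u^r` on `S_r`, `‖l^r - π‖ = 1 - ∑_{x ∈ S_r} l^r(x)`, and
`‖u^r - π‖ = max (∑_{x ∈ S_r} u^r(x) - 1 + m_r) m_r ≤
 max (∑_{x ∈ S_r} u^r(x) - 1 + c/r) (c/r)` where `m_r = ∑_{x ∉ S_r} π(x)`. -/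
theorem distribution_bounds
    {σ : Type*} [Countable σ] (q : σ → σ → ℝ)
    (hq_offdiag : ∀ x y : σ, x ≠ y → 0 ≤ q x y)
    (hq_row : ∀ x : σ, HasSum (fun y => if y = x then 0 else q x y) (-(q x x)))
    (hq_fin : ∀ x : σ, {z : σ | q z x ≠ 0}.Finite)
    (w : σ → ℝ) (hw_nonneg : ∀ x, 0 ≤ w x)
    (hw_norm : ∀ r : ℝ, (truncSet w r).Finite)
    (c : ℝ) (hP : (statSet q w c).Nonempty)
    (lb ub : ℕ → σ → ℝ)
    (hlb : ∀ r : ℕ, lb r = (truncSet w (r : ℝ)).indicator fun x =>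
      sInf {t : ℝ | ∃ ρ ∈ truncPolytope q w c (r : ℝ), t = ρ x})
    (hub : ∀ r : ℕ, ub r = (truncSet w (r : ℝ)).indicator fun x =>
      sSup {t : ℝ | ∃ ρ ∈ truncPolytope q w c (r : ℝ), t = ρ x})
    (π : σ → ℝ) (hπ : π ∈ statSet q w c) (r : ℕ) (hr : 1 ≤ r) :
    (∀ x, lb r x ≤ π x) ∧
    (∀ x ∈ truncSet w (r : ℝ), π x ≤ ub r x) ∧
    tvDist (lb r) π = 1 - ∑' x, lb r x ∧
    tvDist (ub r) π =
      max ((∑' x, ub r x) - 1 + ∑' x : ↥(truncSet w (r : ℝ))ᶜ, π x)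
        (∑' x : ↥(truncSet w (r : ℝ))ᶜ, π x) ∧
    tvDist (ub r) π ≤ max ((∑' x, ub r x) - 1 + c / r) (c / r) := by

  classical
  obtain ⟨hπ0, hπ1, hπQ, hπw, hπc⟩ := hπ
  have hπsum : Summable π := hπ1.summable
  have htπ : ∑' x, π x = 1 := hπ1.tsum_eq
  have hr1 : (1 : ℝ) ≤ (r : ℝ) := by exact_mod_cast hr
  have hrpos : (0 : ℝ) < (r : ℝ) := by linarith
  set Sr : Set σ := truncSet w (r : ℝ) with hSrdef
  have hSrfin : Sr.Finite := hw_norm r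
  -- summability of functions vanishing outside the finite set `Sr`
  have hfin : ∀ f : σ → ℝ, (∀ x, x ∉ Sr → f x = 0) → Summable f := by
    intro f hf
    exact summable_of_ne_finset_zero (s := hSrfin.toFinset)
      (fun x hx => hf x (fun hx' => hx (hSrfin.mem_toFinset.mpr hx')))
  have hindsum : ∀ s : Set σ, Summable (s.indicator π) := fun s =>
    summable_subtype_iff_indicator.mp (hπsum.subtype s)
  -- restriction estimates for nonnegative summable functions
  have hrestrict : ∀ f : σ → ℝ, Summable f → (∀ x, 0 ≤ f x) → ∀ A : Set σ,
      0 ≤ (∑' x : A, f ↑x) ∧ (∑' x : A, f ↑x) ≤ ∑' x, f x := by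
    intro f hf h0 A
    constructor
    · exact tsum_nonneg fun x => h0 x
    · rw [tsum_subtype]
      exact Summable.tsum_le_tsum (fun x => Set.indicator_le_self' (fun y _ => h0 y) x)
        (summable_subtype_iff_indicator.mp (hf.subtype A)) hf
  set M : ℝ := ∑' x : ↥Srᶜ, π ↑x with hMdef
  have hMeq : M = ∑' x, (Srᶜ).indicator π x := tsum_subtype _ _
  have hM0 : 0 ≤ M := by
    rw [hMeq]; exact tsum_nonneg fun x => Set.indicator_nonneg (fun y _ => hπ0 y) x
  have hsplit : (∑' x : Sr, π ↑x) + M = 1 := by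
    rw [hMdef, Summable.tsum_subtype_add_tsum_subtype_compl hπsum Sr, htπ]
  have hwπ0 : ∀ x, 0 ≤ w x * π x := fun x => mul_nonneg (hw_nonneg x) (hπ0 x)
  -- Markov inequality : `M ≤ c / r`
  have hMr : M ≤ c / r := by
    rw [le_div_iff₀ hrpos]
    have h1 : M * r = ∑' x, (r : ℝ) * (Srᶜ).indicator π x := by
      rw [hMeq, tsum_mul_left]; ring
    have hwind : Summable ((Srᶜ).indicator fun x => w x * π x) :=
      summable_subtype_iff_indicator.mp (hπw.subtype Srᶜ)
    have hpt : ∀ x, (r : ℝ) * (Srᶜ).indicator π x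
        ≤ (Srᶜ).indicator (fun x => w x * π x) x := by
      intro x
      by_cases hx : x ∈ Srᶜ
      · rw [Set.indicator_of_mem hx, Set.indicator_of_mem hx]
        have hwx : (r : ℝ) ≤ w x := not_lt.mp hx
        exact mul_le_mul_of_nonneg_right hwx (hπ0 x)
      · rw [Set.indicator_of_notMem hx, Set.indicator_of_notMem hx]; simp
    have h2 : ∑' x, (r : ℝ) * (Srᶜ).indicator π x
        ≤ ∑' x, (Srᶜ).indicator (fun x => w x * π x) x :=
      Summable.tsum_le_tsum hpt ((hindsum Srᶜ).mul_left (r : ℝ)) hwind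
    have h3 : ∑' x, (Srᶜ).indicator (fun x => w x * π x) x ≤ ∑' x, w x * π x :=
      Summable.tsum_le_tsum (fun x => Set.indicator_le_self' (fun y _ => hwπ0 y) x)
        hwind hπw
    linarith
  -- the truncation of `π` belongs to the truncated polytope
  set πr : σ → ℝ := Sr.indicator π with hπrdef
  have hπr_tsum : ∑' x, πr x = 1 - M := by
    rw [hπrdef, ← tsum_subtype Sr π]; linarith
  have hπr_mem : πr ∈ truncPolytope q w c (r : ℝ) := by
    refine ⟨fun x => Set.indicator_nonneg (fun y _ => hπ0 y) x,
      fun x hx => by rw [hπrdef]; exact Set.indicator_of_notMem (show x ∉ Sr from hx) π, ?_, ?_, ?_, ?_⟩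
    · intro x hx
      have key : ∀ y, πr y * q y x = π y * q y x := by
        intro y
        by_cases hy : y ∈ Sr
        · rw [hπrdef, Set.indicator_of_mem hy]
        · have hq0 : q y x = 0 := by
            by_contra h
            exact hy (hx.2 y h)
          simp [hq0]
      rw [tsum_congr key, (hπQ x).tsum_eq]
    · rw [hπr_tsum]; linarith
    · rw [hπr_tsum]; linarith
    · have hle : ∀ x, w x * πr x ≤ w x * π x := fun x =>
        mul_le_mul_of_nonneg_left (Set.indicator_le_self' (fun y _ => hπ0 y) x) (hw_nonneg x)
      have hsum1 : Summable fun x => w x * πr x := by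
        apply hfin
        intro x hx
        rw [hπrdef, Set.indicator_of_notMem hx, mul_zero]
      exact le_trans (Summable.tsum_le_tsum hle hsum1 hπw) hπc
  -- elements of the polytope are summable and bounded by one
  have hρ_sum : ∀ ρ ∈ truncPolytope q w c (r : ℝ), Summable ρ := fun ρ hρ =>
    hfin ρ (fun x hx => hρ.2.1 x hx)
  have hρ_le_one : ∀ ρ ∈ truncPolytope q w c (r : ℝ), ∀ x, ρ x ≤ 1 := fun ρ hρ x =>
    le_trans (Summable.le_tsum (hρ_sum ρ hρ) x (fun j _ => hρ.1 j)) hρ.2.2.2.2.1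
  -- `lb ≤ π` and `π ≤ ub` on `Sr`
  have hlbπ : ∀ x, lb r x ≤ π x := by
    intro x
    rw [hlb r]
    by_cases hx : x ∈ Sr
    · rw [Set.indicator_of_mem hx]
      exact csInf_le ⟨0, by rintro t ⟨ρ, hρ, rfl⟩; exact hρ.1 x⟩
        ⟨πr, hπr_mem, (Set.indicator_of_mem hx π).symm⟩
    · rw [Set.indicator_of_notMem hx]; exact hπ0 x
  have hπub : ∀ x ∈ Sr, π x ≤ ub r x := by
    intro x hx
    rw [hub r, Set.indicator_of_mem hx]
    exact le_csSup ⟨1, by rintro t ⟨ρ, hρ, rfl⟩; exact hρ_le_one ρ hρ x⟩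
      ⟨πr, hπr_mem, (Set.indicator_of_mem hx π).symm⟩
  have hlb_off : ∀ x, x ∉ Sr → lb r x = 0 := fun x hx => by
    rw [hlb r, Set.indicator_of_notMem hx]
  have hub_off : ∀ x, x ∉ Sr → ub r x = 0 := fun x hx => by
    rw [hub r, Set.indicator_of_notMem hx]
  have hlb_sum : Summable (lb r) := hfin _ hlb_off
  have hub_sum : Summable (ub r) := hfin _ hub_off
  -- total variation distance for the lower bound
  set g : σ → ℝ := fun x => π x - lb r x with hgdef
  have hg0 : ∀ x, 0 ≤ g x := fun x => sub_nonneg.mpr (hlbπ x)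
  have hgsum : Summable g := hπsum.sub hlb_sum
  have hgA : ∀ A : Set σ, |∑' x : A, (lb r ↑x - π ↑x)| = ∑' x : A, g ↑x := by
    intro A
    have h1 : ∑' x : A, (lb r ↑x - π ↑x) = -∑' x : A, g ↑x := by
      rw [← tsum_neg]
      exact tsum_congr fun x => by simp only [hgdef]; ring
    rw [h1, abs_neg, abs_of_nonneg (tsum_nonneg fun x : ↑A => hg0 ↑x)]
  have hgval : ∑' x, g x = 1 - ∑' x, lb r x := by
    rw [hgdef, Summable.tsum_sub hπsum hlb_sum, htπ]
  have htv_lb : tvDist (lb r) π = 1 - ∑' x, lb r x := by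
    rw [← hgval]
    unfold tvDist
    apply le_antisymm
    · exact ciSup_le fun A => by rw [hgA A]; exact (hrestrict g hgsum hg0 A).2
    · have h2 : |∑' x : (Set.univ : Set σ), (lb r ↑x - π ↑x)| = ∑' x, g x := by
        rw [hgA, tsum_univ]
      calc ∑' x, g x = |∑' x : (Set.univ : Set σ), (lb r ↑x - π ↑x)| := h2.symm
        _ ≤ ⨆ A : Set σ, |∑' x : A, (lb r ↑x - π ↑x)| :=
          le_ciSup (f := fun A : Set σ => |∑' x : A, (lb r ↑x - π ↑x)|) ⟨∑' x, g x, by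
            rintro t ⟨A, rfl⟩
            exact le_of_eq_of_le (hgA A) (hrestrict g hgsum hg0 A).2⟩ (Set.univ : Set σ)
  -- total variation distance for the upper bound
  set p : σ → ℝ := Sr.indicator (fun x => ub r x - π x) with hpdef
  set m : σ → ℝ := (Srᶜ).indicator π with hmdef
  have hp0 : ∀ x, 0 ≤ p x := fun x =>
    Set.indicator_nonneg (fun y hy => sub_nonneg.mpr (hπub y hy)) x
  have hm0 : ∀ x, 0 ≤ m x := fun x => Set.indicator_nonneg (fun y _ => hπ0 y) x
  have hpsum : Summable p := hfin _ (fun x hx => by rw [hpdef, Set.indicator_of_notMem hx])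
  have hmsum : Summable m := hindsum Srᶜ
  have hmtot : ∑' x, m x = M := by rw [hmdef, ← tsum_subtype Srᶜ π]
  have hdecomp : ∀ x, ub r x - π x = p x - m x := by
    intro x
    by_cases hx : x ∈ Sr
    · rw [hpdef, hmdef, Set.indicator_of_mem hx,
        Set.indicator_of_notMem (Set.notMem_compl_iff.mpr hx)]
      ring
    · rw [hpdef, hmdef, Set.indicator_of_notMem hx,
        Set.indicator_of_mem (Set.mem_compl hx), hub_off x hx]
  have hub_eq_ind : ∀ x, Sr.indicator (ub r) x = ub r x := by
    intro x
    by_cases hx : x ∈ Sr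
    · rw [Set.indicator_of_mem hx]
    · rw [Set.indicator_of_notMem hx, hub_off x hx]
  have hpval : ∑' x, p x = (∑' x, ub r x) - 1 + M := by
    have h1 : ∀ x, p x = Sr.indicator (ub r) x - Sr.indicator π x := by
      intro x
      by_cases hx : x ∈ Sr
      · rw [hpdef, Set.indicator_of_mem hx, Set.indicator_of_mem hx,
          Set.indicator_of_mem hx]
      · rw [hpdef, Set.indicator_of_notMem hx, Set.indicator_of_notMem hx,
          Set.indicator_of_notMem hx]
        ring
    rw [tsum_congr h1,
      Summable.tsum_sub (hfin _ fun x hx => Set.indicator_of_notMem hx _) (hindsum Sr),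
      tsum_congr hub_eq_ind]
    have h2 : ∑' x, Sr.indicator π x = 1 - M := by
      rw [← tsum_subtype Sr π]; linarith
    rw [h2]; ring
  have hptot0 : 0 ≤ ∑' x, p x := tsum_nonneg hp0
  have hubA : ∀ A : Set σ, |∑' x : A, (ub r ↑x - π ↑x)| ≤ max (∑' x, p x) M := by
    intro A
    have hsplitA : ∑' x : A, (ub r ↑x - π ↑x) = (∑' x : A, p ↑x) - ∑' x : A, m ↑x :=
      calc ∑' x : A, (ub r ↑x - π ↑x) = ∑' x : A, (p ↑x - m ↑x) :=
            tsum_congr fun x => hdecomp ↑x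
        _ = (∑' x : A, p ↑x) - ∑' x : A, m ↑x :=
            Summable.tsum_sub (hpsum.subtype A) (hmsum.subtype A)
    obtain ⟨hp1, hp2⟩ := hrestrict p hpsum hp0 A
    obtain ⟨hm1, hm2⟩ := hrestrict m hmsum hm0 A
    have hmaxl := le_max_left (∑' x, p x) M
    have hmaxr := le_max_right (∑' x, p x) M
    rw [hsplitA]
    refine abs_le.mpr ⟨?_, ?_⟩ <;> linarith [hmtot]
  have hpSr : ∑' x : Sr, (ub r ↑x - π ↑x) = ∑' x, p x := by
    have h1 : ∀ x : Sr, ub r ↑x - π ↑x = p ↑x := fun x => by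
      rw [hpdef, Set.indicator_of_mem x.2]
    rw [tsum_congr h1]
    exact tsum_subtype_eq_of_support_subset
      (hpdef ▸ Set.support_indicator_subset)
  have hmSrc : ∑' x : ↥Srᶜ, (ub r ↑x - π ↑x) = -M := by
    have h1 : ∀ x : ↥Srᶜ, ub r ↑x - π ↑x = -(π ↑x) := fun x => by
      rw [hub_off _ x.2]; ring
    rw [tsum_congr h1, tsum_neg, hMdef]
  have htv_ub : tvDist (ub r) π = max ((∑' x, ub r x) - 1 + M) M := by
    have hPm : max ((∑' x, ub r x) - 1 + M) M = max (∑' x, p x) M := by rw [hpval]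
    rw [hPm]
    unfold tvDist
    apply le_antisymm
    · exact ciSup_le hubA
    · have hbdd : BddAbove (Set.range fun A : Set σ => |∑' x : A, (ub r ↑x - π ↑x)|) :=
        ⟨max (∑' x, p x) M, by rintro t ⟨A, rfl⟩; exact hubA A⟩
      apply max_le
      · calc ∑' x, p x = |∑' x : Sr, (ub r ↑x - π ↑x)| := by
              rw [hpSr, abs_of_nonneg hptot0]
          _ ≤ _ := le_ciSup (f := fun A : Set σ => |∑' x : A, (ub r ↑x - π ↑x)|) hbdd Sr
      · calc M = |∑' x : ↥Srᶜ, (ub r ↑x - π ↑x)| := by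
              rw [hmSrc, abs_neg, abs_of_nonneg hM0]
          _ ≤ _ := le_ciSup (f := fun A : Set σ => |∑' x : A, (ub r ↑x - π ↑x)|) hbdd Srᶜ
  refine ⟨hlbπ, hπub, htv_lb, htv_ub, ?_⟩
  rw [htv_ub]
  exact max_le_max (by linarith) hMr
end

section
/- (Corollary on distribution bounds, part (ii).) Let Q be a rate matrix on a countable state space S such that {z ∈ S : q(z,x) ≠ 0} is finite for every x ∈ S, let w be norm-like, and suppose P_{w,c} = {π} is a singleton. Define l^r(x) := inf{π^r(x) : π^r ∈ P^r_{w,c}} and u^r(x) := sup{π^r(x) : π^r ∈ P^r_{w,c}} for x ∈ S_r, and l^r(x) := u^r(x) := 0 for x ∉ S_r. Then u^r converges pointwise to π (lim_{r→∞} u^r(x) = π(x) for every x ∈ S) and l^r converges to π in total variation as r → ∞ (equivalently, lim_{r→∞} (1 − ∑_{x∈S_r} l^r(x)) = 0). -/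
open scoped Classical

open Filter Topology

section helpers
variable {σ : Type*}

lemma poly_summable {w : σ → ℝ} {r : ℝ} (hw : (truncSet w r).Finite)
    {ρ : σ → ℝ} (h0 : ∀ x, ¬ w x < r → ρ x = 0) : Summable ρ :=
  summable_of_ne_finset_zero (s := hw.toFinset) fun x hx =>
    h0 x (by simpa [truncSet, Set.Finite.mem_toFinset] using hx)

lemma poly_summable_w {w : σ → ℝ} {r : ℝ} (hw : (truncSet w r).Finite)
    {ρ : σ → ℝ} (h0 : ∀ x, ¬ w x < r → ρ x = 0) : Summable (fun x => w x * ρ x) :=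
  summable_of_ne_finset_zero (s := hw.toFinset) fun x hx => by
    rw [h0 x (by simpa [truncSet, Set.Finite.mem_toFinset] using hx), mul_zero]

lemma markov {w : σ → ℝ} {R : ℝ} (hw : (truncSet w R).Finite) (hR : 0 < R)
    {f : σ → ℝ} (hf0 : ∀ x, 0 ≤ f x) (hf : Summable f)
    (hwf : Summable fun x => w x * f x) (hwf0 : ∀ x, 0 ≤ w x * f x) :
    ∑' x, f x ≤ (∑ x ∈ hw.toFinset, f x) + (∑' x, w x * f x) / R := by
  have h1 := Summable.sum_add_tsum_compl (s := hw.toFinset) hf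
  have h2 : ∑' (x : ↥((hw.toFinset : Set σ)ᶜ)), f x ≤ (∑' x, w x * f x) / R := by
    have hle : ∀ x : ↥((hw.toFinset : Set σ)ᶜ), f (x:σ) ≤ (w (x:σ) * f (x:σ)) / R := by
      rintro ⟨x, hx⟩
      have hwx : R ≤ w x := by
        simp only [Set.mem_compl_iff, Finset.coe_sort_coe, Set.Finite.coe_toFinset,
          truncSet, Set.mem_setOf_eq, not_lt] at hx
        exact hx
      rw [le_div_iff₀ hR]
      calc f x * R = R * f x := by ring
        _ ≤ w x * f x := mul_le_mul_of_nonneg_right hwx (hf0 x)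
    calc ∑' (x : ↥((hw.toFinset : Set σ)ᶜ)), f x
        ≤ ∑' (x : ↥((hw.toFinset : Set σ)ᶜ)), (w (x:σ) * f (x:σ)) / R :=
          Summable.tsum_le_tsum hle (hf.subtype _) ((hwf.subtype _).div_const R)
      _ = (∑' (x : ↥((hw.toFinset : Set σ)ᶜ)), w (x:σ) * f (x:σ)) / R := tsum_div_const
      _ ≤ (∑' x, w x * f x) / R := by
          gcongr
          exact Summable.tsum_subtype_le (fun x => w x * f x) _ hwf0 hwf
  linarith

lemma indicator_mem_truncPolytope {q : σ → σ → ℝ} {w : σ → ℝ} {c : ℝ}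
    (hw_nonneg : ∀ x, 0 ≤ w x) (hw_norm : ∀ r : ℝ, (truncSet w r).Finite)
    {π : σ → ℝ} (hπ : π ∈ statSet q w c) {r : ℝ} (hr : 0 < r) :
    (truncSet w r).indicator π ∈ truncPolytope q w c r := by
  obtain ⟨hπ0, hπ1, hπstat, hπws, hπwc⟩ := hπ
  set ι := (truncSet w r).indicator π with hι
  have hιval : ∀ x, w x < r → ι x = π x := fun x hx => Set.indicator_of_mem (show x ∈ truncSet w r from hx) π
  have hι0 : ∀ x, ¬ w x < r → ι x = 0 := fun x hx => Set.indicator_of_notMem (show x ∉ truncSet w r from hx) π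
  have hιnn : ∀ x, 0 ≤ ι x := fun x => Set.indicator_nonneg (fun y _ => hπ0 y) x
  have hιle : ∀ x, ι x ≤ π x := fun x => Set.indicator_le_self' (fun y _ => hπ0 y) x
  have hιs : Summable ι := poly_summable (hw_norm r) hι0
  have hιws : Summable fun x => w x * ι x := poly_summable_w (hw_norm r) hι0
  refine ⟨hιnn, hι0, ?_, ?_, ?_, ?_⟩
  · intro x hx
    have heq : (fun y => ι y * q y x) = fun y => π y * q y x := by
      funext y
      by_cases hq : q y x = 0
      · simp [hq]
      · rw [hιval y (hx.2 y hq)]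
    rw [heq]
    exact (hπstat x).tsum_eq
  · -- 1 - c / r ≤ ∑' ι
    have hsum_eq : ∑' x, ι x = ∑ x ∈ (hw_norm r).toFinset, π x := by
      rw [tsum_eq_sum (s := (hw_norm r).toFinset)
        (fun x hx => hι0 x (by simpa [truncSet, Set.Finite.mem_toFinset] using hx))]
      exact Finset.sum_congr rfl fun x hx => hιval x
        (by simpa [truncSet, Set.Finite.mem_toFinset] using hx)
    have hm := markov (hw_norm r) hr hπ0 hπ1.summable hπws
      (fun x => mul_nonneg (hw_nonneg x) (hπ0 x))
    rw [hπ1.tsum_eq] at hm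
    have h2 : (∑' x, w x * π x) / r ≤ c / r := by gcongr
    rw [hsum_eq]; linarith
  · calc ∑' x, ι x ≤ ∑' x, π x := Summable.tsum_le_tsum hιle hιs hπ1.summable
      _ = 1 := hπ1.tsum_eq
  · calc ∑' x, w x * ι x ≤ ∑' x, w x * π x :=
        Summable.tsum_le_tsum (fun x => mul_le_mul_of_nonneg_left (hιle x) (hw_nonneg x)) hιws hπws
      _ ≤ c := hπwc

end helpers

lemma key_unif {σ : Type*} [Countable σ] (q : σ → σ → ℝ)
    (hq_fin : ∀ x : σ, {z : σ | q z x ≠ 0}.Finite)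
    (w : σ → ℝ) (hw_nonneg : ∀ x, 0 ≤ w x)
    (hw_norm : ∀ r : ℝ, (truncSet w r).Finite)
    (c : ℝ) (π : σ → ℝ) (hsingle : statSet q w c = {π})
    (x₀ : σ) (ε : ℝ) (hε : 0 < ε) :
    ∀ᶠ r : ℕ in atTop, ∀ ρ ∈ truncPolytope q w c (r : ℝ), |ρ x₀ - π x₀| ≤ ε := by
  have hπmem : π ∈ statSet q w c := by rw [hsingle]; exact Set.mem_singleton _
  obtain ⟨hπ0, hπ1, hπstat, hπws, hπwc⟩ := hπmem
  have hc : 0 ≤ c :=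
    le_trans (tsum_nonneg fun x => mul_nonneg (hw_nonneg x) (hπ0 x)) hπwc
  by_contra hcon
  rw [Filter.not_eventually] at hcon
  have hcon' : ∃ᶠ r : ℕ in atTop,
      ∃ ρ ∈ truncPolytope q w c (r : ℝ), ε < |ρ x₀ - π x₀| := by
    refine hcon.mono fun r hr => ?_
    push_neg at hr
    exact hr
  obtain ⟨u, hu_mono, hu⟩ := extraction_of_frequently_atTop hcon'
  choose ρs hmem hbad using hu
  have hρ0k : ∀ k y, 0 ≤ ρs k y := fun k y => (hmem k).1 y
  have hsum : ∀ k, Summable (ρs k) := fun k => poly_summable (hw_norm _) (hmem k).2.1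
  have hwsum : ∀ k, Summable fun x => w x * ρs k x :=
    fun k => poly_summable_w (hw_norm _) (hmem k).2.1
  have h01 : ∀ k, ρs k ∈ Set.pi Set.univ (fun _ : σ => Set.Icc (0:ℝ) 1) := by
    intro k
    refine Set.mem_univ_pi.2 fun y => ⟨hρ0k k y, ?_⟩
    calc ρs k y ≤ ∑' z, ρs k z := Summable.le_tsum (hsum k) y fun z _ => hρ0k k z
      _ ≤ 1 := (hmem k).2.2.2.2.1
  obtain ⟨ρ, hρIcc, φ, hφ, hlim⟩ :=
    (isCompact_univ_pi fun _ : σ => isCompact_Icc (a := (0:ℝ)) (b := 1)).tendsto_subseq h01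
  have hpt : ∀ y, Tendsto (fun k => ρs (φ k) y) atTop (𝓝 (ρ y)) := fun y =>
    tendsto_pi_nhds.1 hlim y
  have hρ0 : ∀ y, 0 ≤ ρ y := fun y => (hρIcc y (Set.mem_univ y)).1
  have hkle : ∀ k : ℕ, (k : ℝ) ≤ (u (φ k) : ℝ) := by
    intro k
    exact_mod_cast le_trans hφ.le_apply hu_mono.le_apply
  have hto : Tendsto (fun k => c / (u (φ k) : ℝ)) atTop (𝓝 0) :=
    (tendsto_const_div_atTop_nhds_zero_nat c).comp (hu_mono.comp hφ).tendsto_atTop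
  -- partial sums of ρ are ≤ 1
  have hps : ∀ s : Finset σ, ∑ y ∈ s, ρ y ≤ 1 := by
    intro s
    refine le_of_tendsto (tendsto_finset_sum s fun y _ => hpt y)
      (Eventually.of_forall fun k => ?_)
    calc ∑ y ∈ s, ρs (φ k) y ≤ ∑' y, ρs (φ k) y :=
        Summable.sum_le_tsum s (fun y _ => hρ0k _ y) (hsum _)
      _ ≤ 1 := (hmem (φ k)).2.2.2.2.1
  have hρsummable : Summable ρ := summable_of_sum_le (fun y => hρ0 y) hps
  have hle1 : ∑' y, ρ y ≤ 1 := Summable.tsum_le_of_sum_le hρsummable hps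
  -- lower bound on tsum
  have hge : ∀ R : ℕ, 1 ≤ R → 1 - c / (R : ℝ) ≤ ∑' y, ρ y := by
    intro R hR
    have hRpos : (0:ℝ) < (R : ℝ) := by exact_mod_cast hR
    set A := (hw_norm (R : ℝ)).toFinset with hA
    have hAk : ∀ k, 1 - c / (u (φ k) : ℝ) - c / (R : ℝ) ≤ ∑ y ∈ A, ρs (φ k) y := by
      intro k
      have hmk := hmem (φ k)
      have hmarkov := markov (hw_norm (R : ℝ)) hRpos (hρ0k (φ k)) (hsum (φ k))
        (hwsum (φ k)) (fun x => mul_nonneg (hw_nonneg x) (hρ0k (φ k) x))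
      have h1 : 1 - c / (u (φ k) : ℝ) ≤ ∑' y, ρs (φ k) y := hmk.2.2.2.1
      have h2 : (∑' y, w y * ρs (φ k) y) / (R : ℝ) ≤ c / (R : ℝ) := by
        gcongr
        exact hmk.2.2.2.2.2
      linarith
    have hlimA : Tendsto (fun k => ∑ y ∈ A, ρs (φ k) y) atTop (𝓝 (∑ y ∈ A, ρ y)) :=
      tendsto_finset_sum A fun y _ => hpt y
    have hlimL : Tendsto (fun k : ℕ => 1 - c / (u (φ k) : ℝ) - c / (R : ℝ)) atTop
        (𝓝 (1 - 0 - c / (R : ℝ))) :=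
      (tendsto_const_nhds.sub hto).sub tendsto_const_nhds
    have hAle : 1 - 0 - c / (R : ℝ) ≤ ∑ y ∈ A, ρ y :=
      le_of_tendsto_of_tendsto' hlimL hlimA hAk
    calc 1 - c / (R : ℝ) = 1 - 0 - c / (R : ℝ) := by ring
      _ ≤ ∑ y ∈ A, ρ y := hAle
      _ ≤ ∑' y, ρ y := Summable.sum_le_tsum A (fun y _ => hρ0 y) hρsummable
  have htsum1 : ∑' y, ρ y = 1 := by
    refine le_antisymm hle1 ?_
    have hlim1 : Tendsto (fun R : ℕ => 1 - c / (R : ℝ)) atTop (𝓝 1) := by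
      simpa using tendsto_const_nhds.sub (tendsto_const_div_atTop_nhds_zero_nat c)
    exact le_of_tendsto hlim1 (eventually_atTop.2 ⟨1, fun R hR => hge R hR⟩)
  have hHasSum : HasSum ρ 1 := htsum1 ▸ hρsummable.hasSum
  -- stationarity
  have hstat : ∀ x, HasSum (fun y => ρ y * q y x) 0 := by
    intro x
    set s := (hq_fin x).toFinset with hs
    have hoff : ∀ y ∉ s, ρ y * q y x = 0 := by
      intro y hy
      have hq0 : q y x = 0 := by
        by_contra h
        exact hy ((hq_fin x).mem_toFinset.2 h)
      simp [hq0]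
    have hoffk : ∀ k, ∀ y ∉ s, ρs k y * q y x = 0 := by
      intro k y hy
      have hq0 : q y x = 0 := by
        by_contra h
        exact hy ((hq_fin x).mem_toFinset.2 h)
      simp [hq0]
    obtain ⟨N, hN⟩ : ∃ N : ℕ, ∀ z ∈ insert x s, w z < (N : ℝ) := by
      obtain ⟨N, hN⟩ := exists_nat_gt ((insert x s).sup' (Finset.insert_nonempty _ _) w)
      exact ⟨N, fun z hz => lt_of_le_of_lt (Finset.le_sup' w hz) hN⟩
    have heq : ∀ᶠ k in atTop, ∑ y ∈ s, ρs (φ k) y * q y x = 0 := by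
      refine eventually_atTop.2 ⟨N, fun k hk => ?_⟩
      have hNle : (N : ℝ) ≤ (u (φ k) : ℝ) := le_trans (by exact_mod_cast hk) (hkle k)
      have hx_eq : x ∈ eqStates q w ((u (φ k) : ℕ) : ℝ) := by
        refine ⟨lt_of_lt_of_le (hN x (Finset.mem_insert_self _ _)) hNle, fun z hz => ?_⟩
        exact lt_of_lt_of_le
          (hN z (Finset.mem_insert_of_mem ((hq_fin x).mem_toFinset.2 hz))) hNle
      have h0 := (hmem (φ k)).2.2.1 x hx_eq
      rwa [tsum_eq_sum (s := s) (hoffk (φ k))] at h0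
    have hlimsum : Tendsto (fun k => ∑ y ∈ s, ρs (φ k) y * q y x) atTop
        (𝓝 (∑ y ∈ s, ρ y * q y x)) :=
      tendsto_finset_sum s fun y _ => (hpt y).mul tendsto_const_nhds
    have hlim0 : Tendsto (fun k => ∑ y ∈ s, ρs (φ k) y * q y x) atTop (𝓝 0) :=
      Tendsto.congr' (heq.mono fun k h => h.symm) tendsto_const_nhds
    have hsum0 : ∑ y ∈ s, ρ y * q y x = 0 := tendsto_nhds_unique hlimsum hlim0
    exact hsum0 ▸ hasSum_sum_of_ne_finset_zero hoff
  -- moment bound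
  have hwps : ∀ s : Finset σ, ∑ y ∈ s, w y * ρ y ≤ c := by
    intro s
    refine le_of_tendsto (tendsto_finset_sum s fun y _ => tendsto_const_nhds.mul (hpt y))
      (Eventually.of_forall fun k => ?_)
    calc ∑ y ∈ s, w y * ρs (φ k) y ≤ ∑' y, w y * ρs (φ k) y :=
        Summable.sum_le_tsum s (fun y _ => mul_nonneg (hw_nonneg y) (hρ0k _ y)) (hwsum _)
      _ ≤ c := (hmem (φ k)).2.2.2.2.2
  have hwsummable : Summable fun y => w y * ρ y :=
    summable_of_sum_le (fun y => mul_nonneg (hw_nonneg y) (hρ0 y)) hwps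
  have hwle : ∑' y, w y * ρ y ≤ c := Summable.tsum_le_of_sum_le hwsummable hwps
  have hρstat : ρ ∈ statSet q w c := ⟨hρ0, hHasSum, hstat, hwsummable, hwle⟩
  rw [hsingle] at hρstat
  have hρπ : ρ = π := hρstat
  have hεle : ε ≤ |ρ x₀ - π x₀| := by
    refine ge_of_tendsto (((hpt x₀).sub tendsto_const_nhds).abs) ?_
    exact Eventually.of_forall fun k => (hbad (φ k)).le
  rw [hρπ] at hεle
  simp at hεle
  linarith

/-- **Statement 13** (corollary on distribution bounds, part (ii)).
If `P_{w,c} = {π}` is a singleton, then the upper bounds `u^r` converge pointwise to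
`π` and the lower bounds `l^r` converge to `π` in total variation as `r → ∞`
(equivalently, `1 - ∑_{x ∈ S_r} l^r(x) → 0`). -/
theorem distribution_bounds_converge
    {σ : Type*} [Countable σ] (q : σ → σ → ℝ)
    (hq_offdiag : ∀ x y : σ, x ≠ y → 0 ≤ q x y)
    (hq_row : ∀ x : σ, HasSum (fun y => if y = x then 0 else q x y) (-(q x x)))
    (hq_fin : ∀ x : σ, {z : σ | q z x ≠ 0}.Finite)
    (w : σ → ℝ) (hw_nonneg : ∀ x, 0 ≤ w x)
    (hw_norm : ∀ r : ℝ, (truncSet w r).Finite)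
    (c : ℝ)
    (lb ub : ℕ → σ → ℝ)
    (hlb : ∀ r : ℕ, lb r = (truncSet w (r : ℝ)).indicator fun x =>
      sInf {t : ℝ | ∃ ρ ∈ truncPolytope q w c (r : ℝ), t = ρ x})
    (hub : ∀ r : ℕ, ub r = (truncSet w (r : ℝ)).indicator fun x =>
      sSup {t : ℝ | ∃ ρ ∈ truncPolytope q w c (r : ℝ), t = ρ x})
    (π : σ → ℝ) (hsingle : statSet q w c = {π}) :
    (∀ x, Tendsto (fun r : ℕ => ub r x) atTop (nhds (π x))) ∧
    Tendsto (fun r : ℕ => tvDist (lb r) π) atTop (nhds 0) ∧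
    Tendsto (fun r : ℕ => 1 - ∑' x, lb r x) atTop (nhds 0) := by
  have hπmem : π ∈ statSet q w c := by rw [hsingle]; exact Set.mem_singleton _
  have hπ0 : ∀ x, 0 ≤ π x := hπmem.1
  have hπ1 : HasSum π 1 := hπmem.2.1
  have key := key_unif q hq_fin w hw_nonneg hw_norm c π hsingle
  -- membership of π x in the candidate sets
  have hmemπ : ∀ (r : ℕ) (x : σ), w x < (r : ℝ) →
      π x ∈ {t : ℝ | ∃ ρ ∈ truncPolytope q w c (r : ℝ), t = ρ x} := by
    intro r x hx
    have hr0 : (0 : ℝ) < r := lt_of_le_of_lt (hw_nonneg x) hx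
    exact ⟨(truncSet w (r : ℝ)).indicator π,
      indicator_mem_truncPolytope hw_nonneg hw_norm hπmem hr0,
      (Set.indicator_of_mem (show x ∈ truncSet w (r : ℝ) from hx) π).symm⟩
  have hbddb : ∀ (r : ℕ) (x : σ),
      ∀ t ∈ {t : ℝ | ∃ ρ ∈ truncPolytope q w c (r : ℝ), t = ρ x}, 0 ≤ t := by
    rintro r x t ⟨ρ, hρ, rfl⟩
    exact hρ.1 x
  -- bounds on lb
  have hlb_bounds : ∀ (r : ℕ) (x : σ), 0 ≤ lb r x ∧ lb r x ≤ π x := by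
    intro r x
    rw [hlb r]
    by_cases hx : x ∈ truncSet w (r : ℝ)
    · rw [Set.indicator_of_mem hx]
      constructor
      · exact Real.sInf_nonneg (hbddb r x)
      · exact csInf_le ⟨0, hbddb r x⟩ (hmemπ r x hx)
    · rw [Set.indicator_of_notMem hx]
      exact ⟨le_refl 0, hπ0 x⟩
  -- pointwise convergence of lb
  have hlbpt : ∀ x, Tendsto (fun r : ℕ => lb r x) atTop (𝓝 (π x)) := by
    intro x
    rw [Metric.tendsto_atTop]
    intro ε hε
    obtain ⟨N₁, hN₁⟩ := eventually_atTop.1 (key x (ε / 2) (by linarith))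
    obtain ⟨N₂, hN₂⟩ := exists_nat_gt (w x)
    refine ⟨max N₁ N₂, fun r hr => ?_⟩
    have hxr : w x < (r : ℝ) :=
      lt_of_lt_of_le hN₂ (by exact_mod_cast le_trans (le_max_right N₁ N₂) hr)
    have hkey := hN₁ r (le_trans (le_max_left N₁ N₂) hr)
    have hval : lb r x = sInf {t : ℝ | ∃ ρ ∈ truncPolytope q w c (r : ℝ), t = ρ x} := by
      rw [hlb r, Set.indicator_of_mem (show x ∈ truncSet w (r : ℝ) from hxr)]
    have hlow : π x - ε / 2 ≤ lb r x := by
      rw [hval]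
      refine le_csInf ⟨π x, hmemπ r x hxr⟩ ?_
      rintro t ⟨ρ, hρ, rfl⟩
      have := hkey ρ hρ
      have := abs_le.1 this
      linarith [this.1]
    have hhigh : lb r x ≤ π x := (hlb_bounds r x).2
    rw [Real.dist_eq]
    have : |lb r x - π x| ≤ ε / 2 := abs_le.2 ⟨by linarith, by linarith⟩
    linarith
  -- ub part
  have hubconv : ∀ x, Tendsto (fun r : ℕ => ub r x) atTop (𝓝 (π x)) := by
    intro x
    rw [Metric.tendsto_atTop]
    intro ε hε
    obtain ⟨N₁, hN₁⟩ := eventually_atTop.1 (key x (ε / 2) (by linarith))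
    obtain ⟨N₂, hN₂⟩ := exists_nat_gt (w x)
    refine ⟨max N₁ N₂, fun r hr => ?_⟩
    have hxr : w x < (r : ℝ) :=
      lt_of_lt_of_le hN₂ (by exact_mod_cast le_trans (le_max_right N₁ N₂) hr)
    have hkey := hN₁ r (le_trans (le_max_left N₁ N₂) hr)
    have hval : ub r x = sSup {t : ℝ | ∃ ρ ∈ truncPolytope q w c (r : ℝ), t = ρ x} := by
      rw [hub r, Set.indicator_of_mem (show x ∈ truncSet w (r : ℝ) from hxr)]
    have hubd : ∀ t ∈ {t : ℝ | ∃ ρ ∈ truncPolytope q w c (r : ℝ), t = ρ x},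
        t ≤ π x + ε / 2 := by
      rintro t ⟨ρ, hρ, rfl⟩
      have := abs_le.1 (hkey ρ hρ)
      linarith [this.2]
    have hhigh : ub r x ≤ π x + ε / 2 := by
      rw [hval]
      exact csSup_le ⟨π x, hmemπ r x hxr⟩ hubd
    have hlow : π x ≤ ub r x := by
      rw [hval]
      exact le_csSup ⟨π x + ε / 2, hubd⟩ (hmemπ r x hxr)
    rw [Real.dist_eq]
    have : |ub r x - π x| ≤ ε / 2 := abs_le.2 ⟨by linarith, by linarith⟩
    linarith
  -- summability of lb
  have hlbsummable : ∀ r : ℕ, Summable (lb r) := by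
    intro r
    refine poly_summable (hw_norm (r : ℝ)) fun x hx => ?_
    rw [hlb r, Set.indicator_of_notMem (show x ∉ truncSet w (r : ℝ) from hx)]
  have heq : ∀ r : ℕ, 1 - ∑' x, lb r x = ∑' x, (π x - lb r x) := by
    intro r
    rw [Summable.tsum_sub hπ1.summable (hlbsummable r), hπ1.tsum_eq]
  -- third component
  have h3 : Tendsto (fun r : ℕ => 1 - ∑' x, lb r x) atTop (𝓝 0) := by
    have hdom : Tendsto (fun r : ℕ => ∑' x, (π x - lb r x)) atTop (𝓝 0) := by
      have := tendsto_tsum_of_dominated_convergence (𝓕 := (atTop : Filter ℕ))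
        (f := fun r x => π x - lb r x) (g := fun _ => (0 : ℝ)) (bound := π)
        hπ1.summable
        (fun x => by simpa using (hlbpt x).const_sub (π x))
        (Eventually.of_forall fun r x => by
          show ‖π x - lb r x‖ ≤ π x
          rw [Real.norm_eq_abs, abs_of_nonneg (by linarith [(hlb_bounds r x).2])]
          linarith [(hlb_bounds r x).1])
      simpa using this
    exact hdom.congr fun r => (heq r).symm
  refine ⟨hubconv, ?_, h3⟩
  -- total variation part
  have htv_nonneg : ∀ r : ℕ, 0 ≤ tvDist (lb r) π := fun r =>
    Real.iSup_nonneg fun A => abs_nonneg _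
  have htv_le : ∀ r : ℕ, tvDist (lb r) π ≤ 1 - ∑' x, lb r x := by
    intro r
    have hsml : Summable fun x => π x - lb r x := hπ1.summable.sub (hlbsummable r)
    have hnn : ∀ x, 0 ≤ π x - lb r x := fun x => by linarith [(hlb_bounds r x).2]
    have hens : 0 ≤ 1 - ∑' x, lb r x := by
      rw [heq r]; exact tsum_nonneg hnn
    rw [tvDist]
    refine Real.iSup_le (fun A => ?_) hens
    have h1 : ∑' x : A, (lb r x - π x) = - ∑' x : A, (π x - lb r x) := by
      rw [← tsum_neg]
      congr 1
      funext x
      ring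
    rw [h1, abs_neg, abs_of_nonneg (tsum_nonneg fun x : A => hnn x)]
    calc ∑' x : A, (π x - lb r x) ≤ ∑' x, (π x - lb r x) :=
        Summable.tsum_subtype_le (fun x => π x - lb r x) A hnn hsml
      _ = 1 - ∑' x, lb r x := (heq r).symm
  exact squeeze_zero htv_nonneg htv_le h3
end
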